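/- arXiv:1505.07578 — 7 statements merged into one kernel-verified Lean document; each statement's English description precedes it below -/
import Mathlib

section
/- Let X ⊆ ℕ and let f : ℕ × ℕ → Option (Finset ℕ) be computable with Xᶜ ≤ₑ^f X. Define the partial function g by: g(x) is the least n such that ∃ F : Finset ℕ, f (x, n) = some F ∧ ↑F ⊆ X (undefined if no such n exists), and let G = { Nat.pair x m | g(x) is defined and g(x) = m } ⊆ ℕ. Then G ≤ₑ X. -/
set_option maxHeartbeats 1000000


/-- A set `X ⊆ ℕ` satisfies the Horn implications encoded by `S`:
a list `n₀ :: t ∈ S` means `(∀ m ∈ t, m ∈ X) → n₀ ∈ X`. -/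
def SatisfiesHorn (S : Set (List ℕ)) (X : Set ℕ) : Prop :=
  ∀ n₀ : ℕ, ∀ t : List ℕ, (n₀ :: t) ∈ S → (∀ m ∈ t, m ∈ X) → n₀ ∈ X

/-- The quasivariety defined by `S`. -/
def QV (S : Set (List ℕ)) : Set (Set ℕ) := {X | SatisfiesHorn S X}

/-- The closure of `Y`: the smallest element of `QV S` containing `Y`. -/
def QVclosure (S : Set (List ℕ)) (Y : Set ℕ) : Set ℕ :=
  ⋂₀ {X | X ∈ QV S ∧ Y ⊆ X}

/-- `A` is enumeration reducible to `B` via `f`. -/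
def EnumRedVia (A B : Set ℕ) (f : ℕ × ℕ → Option (Finset ℕ)) : Prop :=
  Computable f ∧
    ∀ x : ℕ, x ∈ A ↔ ∃ n : ℕ, ∃ F : Finset ℕ, f (x, n) = some F ∧ ↑F ⊆ B

/-- `A` is enumeration reducible to `B`. -/
def EnumRed (A B : Set ℕ) : Prop := ∃ f : ℕ × ℕ → Option (Finset ℕ), EnumRedVia A B f

namespace ModAux

open Denumerable Encodable

/-! ### Finsets of naturals versus lists of naturals, via the denumerable encoding -/

/-- The encoding of a finset of naturals used by the `Primcodable` instance. -/
def encF (F : Finset ℕ) : ℕ := @Encodable.encode (Finset ℕ) Primcodable.toEncodable F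

lemma ofNat_encF (F : Finset ℕ) : ofNat (Finset ℕ) (encF F) = F := Denumerable.ofNat_encode F

lemma primrec_encF : Primrec encF := Primrec.encode

/-- The sorted list of elements of a finset, recovered from its encoding. -/
def fsList (F : Finset ℕ) : List ℕ := raise' (ofNat (List ℕ) (encF F)) 0

lemma ofNat_finset (n : ℕ) : ofNat (Finset ℕ) n =
    Finset.map (Denumerable.eqv ℕ).symm.toEmbedding (raise'Finset (ofNat (List ℕ) n) 0) :=
  ofNat_of_decode rfl

lemma mem_ofNat_finset {a n : ℕ} :
    a ∈ ofNat (Finset ℕ) n ↔ a ∈ raise' (ofNat (List ℕ) n) 0 := by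
  rw [ofNat_finset]
  simp only [Finset.mem_map, Equiv.coe_toEmbedding]
  constructor
  · rintro ⟨b, hb, rfl⟩
    have hbb : (Denumerable.eqv ℕ).symm b = b := rfl
    rw [hbb]
    exact hb
  · intro h
    exact ⟨a, h, rfl⟩

lemma mem_fsList {a : ℕ} {F : Finset ℕ} : a ∈ fsList F ↔ a ∈ F := by
  rw [fsList, ← mem_ofNat_finset, ofNat_encF]

/-- Insert into a sorted list. -/
def insS (s : List ℕ) (a : ℕ) : List ℕ :=
  bif decide (s.idxOf a < s.length) then s
  else s.filter (fun b => decide (b < a)) ++ a :: s.filter (fun b => decide (a < b))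

lemma mem_insS {s : List ℕ} {a b : ℕ} : b ∈ insS s a ↔ b = a ∨ b ∈ s := by
  by_cases h : a ∈ s
  · rw [insS, decide_eq_true (List.idxOf_lt_length_iff.2 h)]
    simp only [cond_true]
    constructor
    · exact Or.inr
    · rintro (rfl | hb) <;> assumption
  · rw [insS, decide_eq_false (fun hc => h (List.idxOf_lt_length_iff.1 hc))]
    simp only [cond_false, List.mem_append, List.mem_cons, List.mem_filter,
      decide_eq_true_eq]
    constructor
    · rintro (⟨hb, _⟩ | rfl | ⟨hb, _⟩)
      exacts [Or.inr hb, Or.inl rfl, Or.inr hb]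
    · rintro (rfl | hb)
      · exact Or.inr (Or.inl rfl)
      · rcases lt_trichotomy b a with h1 | rfl | h1
        exacts [Or.inl ⟨hb, h1⟩, absurd hb h, Or.inr (Or.inr ⟨hb, h1⟩)]

lemma sorted_insS {s : List ℕ} (hs : s.Pairwise (· < ·)) (a : ℕ) :
    (insS s a).Pairwise (· < ·) := by
  by_cases h : a ∈ s
  · rw [insS, decide_eq_true (List.idxOf_lt_length_iff.2 h)]
    simpa using hs
  · rw [insS, decide_eq_false (fun hc => h (List.idxOf_lt_length_iff.1 hc))]
    simp only [cond_false]
    rw [List.pairwise_append]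
    refine ⟨hs.filter _, ?_, ?_⟩
    · rw [List.pairwise_cons]
      refine ⟨fun b hb => ?_, hs.filter _⟩
      exact of_decide_eq_true (List.mem_filter.1 hb).2
    · intro x hx y hy
      have hxa : x < a := of_decide_eq_true (List.mem_filter.1 hx).2
      rcases List.mem_cons.1 hy with rfl | hy'
      · exact hxa
      · exact hxa.trans (of_decide_eq_true (List.mem_filter.1 hy').2)

/-- Sort a list (removing duplicates). -/
def sortD (l : List ℕ) : List ℕ := l.foldl insS []

lemma mem_foldl_insS {b : ℕ} : ∀ (l s : List ℕ), b ∈ l.foldl insS s ↔ b ∈ s ∨ b ∈ l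
  | [], s => by simp
  | a :: l, s => by
    rw [List.foldl_cons, mem_foldl_insS l, mem_insS]
    simp only [List.mem_cons]
    tauto

lemma mem_sortD {b : ℕ} {l : List ℕ} : b ∈ sortD l ↔ b ∈ l := by
  rw [sortD, mem_foldl_insS]; simp

lemma sorted_foldl_insS : ∀ (l s : List ℕ), s.Pairwise (· < ·) → (l.foldl insS s).Pairwise (· < ·)
  | [], _, hs => hs
  | a :: l, s, hs => by
    rw [List.foldl_cons]
    exact sorted_foldl_insS l _ (sorted_insS hs a)

lemma sorted_sortD (l : List ℕ) : (sortD l).Pairwise (· < ·) :=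
  sorted_foldl_insS l [] (by simp)

/-- Turn a list into a finset, computably. -/
def listToF (l : List ℕ) : Finset ℕ := ofNat (Finset ℕ) (encode (lower' (sortD l) 0))

lemma mem_listToF {a : ℕ} {l : List ℕ} : a ∈ listToF l ↔ a ∈ l := by
  rw [listToF, mem_ofNat_finset, ofNat_encode,
    raise_lower' (fun m _ => Nat.zero_le m) (sorted_sortD l).sortedLT, mem_sortD]

/-! ### Primitive recursiveness of the helpers -/

lemma filter_eq_flatMap (p : ℕ → Bool) :
    ∀ s : List ℕ, s.filter p = s.flatMap (fun b => bif p b then [b] else [])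
  | [] => rfl
  | a :: s => by
    rw [List.flatMap_cons, ← filter_eq_flatMap p s]
    cases h : p a <;> simp [List.filter_cons, h]

lemma primrec_filter_lt :
    Primrec₂ (fun (s : List ℕ) (a : ℕ) => s.filter (fun b => decide (b < a))) := by
  have h : Primrec₂ (fun (s : List ℕ) (a : ℕ) =>
      s.flatMap (fun b => bif decide (b < a) then [b] else [])) :=
    Primrec.list_flatMap Primrec.fst
      (Primrec.cond (Primrec.nat_lt.comp Primrec.snd (Primrec.snd.comp Primrec.fst)).decide
        ((Primrec.list_cons.comp Primrec.snd (Primrec.const []))) (Primrec.const []))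
  exact h.of_eq fun s a => (filter_eq_flatMap _ s).symm

lemma primrec_filter_gt :
    Primrec₂ (fun (s : List ℕ) (a : ℕ) => s.filter (fun b => decide (a < b))) := by
  have h : Primrec₂ (fun (s : List ℕ) (a : ℕ) =>
      s.flatMap (fun b => bif decide (a < b) then [b] else [])) :=
    Primrec.list_flatMap Primrec.fst
      (Primrec.cond (Primrec.nat_lt.comp (Primrec.snd.comp Primrec.fst) Primrec.snd).decide
        ((Primrec.list_cons.comp Primrec.snd (Primrec.const []))) (Primrec.const []))
  exact h.of_eq fun s a => (filter_eq_flatMap _ s).symm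

lemma primrec_memB :
    Primrec₂ (fun (a : ℕ) (s : List ℕ) => decide (s.idxOf a < s.length)) :=
  (Primrec.nat_lt.comp (Primrec.list_idxOf.comp Primrec.fst Primrec.snd)
    (Primrec.list_length.comp Primrec.snd)).decide

lemma primrec_insS : Primrec₂ insS := by
  unfold insS
  exact Primrec.cond (primrec_memB.comp Primrec.snd Primrec.fst) Primrec.fst
    (Primrec.list_append.comp (primrec_filter_lt.comp Primrec.fst Primrec.snd)
      (Primrec.list_cons.comp Primrec.snd (primrec_filter_gt.comp Primrec.fst Primrec.snd)))

lemma primrec_sortD : Primrec sortD :=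
  (Primrec.list_foldl Primrec.id (Primrec.const [])
    (primrec_insS.comp (Primrec.fst.comp Primrec.snd) (Primrec.snd.comp Primrec.snd)).to₂)

lemma raise'_foldl : ∀ (l acc : List ℕ) (n : ℕ),
    (l.foldl (fun (s : List ℕ × ℕ) m => (s.1 ++ [m + s.2], m + s.2 + 1)) (acc, n)).1
      = acc ++ raise' l n
  | [], acc, n => by simp [raise']
  | m :: l, acc, n => by
    rw [List.foldl_cons, raise'_foldl l]
    simp [raise']

lemma primrec_raise' : Primrec (fun l : List ℕ => raise' l 0) := by
  have hstep : Primrec (fun p : (List ℕ × ℕ) × ℕ =>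
      ((p.1.1 ++ [p.2 + p.1.2], p.2 + p.1.2 + 1) : List ℕ × ℕ)) := by
    refine Primrec.pair ?_ ?_
    · exact Primrec.list_append.comp (Primrec.fst.comp Primrec.fst)
        (Primrec.list_cons.comp
          (Primrec.nat_add.comp Primrec.snd (Primrec.snd.comp Primrec.fst))
          (Primrec.const []))
    · exact Primrec.succ.comp
        (Primrec.nat_add.comp Primrec.snd (Primrec.snd.comp Primrec.fst))
  have h1 : Primrec (fun l : List ℕ =>
      l.foldl (fun (s : List ℕ × ℕ) m => (s.1 ++ [m + s.2], m + s.2 + 1)) ([], 0)) :=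
    Primrec.list_foldl Primrec.id (Primrec.const ([], 0)) (hstep.comp Primrec.snd).to₂
  exact (Primrec.fst.comp h1).of_eq fun l => by rw [raise'_foldl]; simp

lemma lower'_foldl : ∀ (l acc : List ℕ) (n : ℕ),
    (l.foldl (fun (s : List ℕ × ℕ) m => (s.1 ++ [m - s.2], m + 1)) (acc, n)).1
      = acc ++ lower' l n
  | [], acc, n => by simp [lower']
  | m :: l, acc, n => by
    rw [List.foldl_cons, lower'_foldl l]
    simp [lower']

lemma primrec_lower' : Primrec (fun l : List ℕ => lower' l 0) := by
  have hstep : Primrec (fun p : (List ℕ × ℕ) × ℕ =>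
      ((p.1.1 ++ [p.2 - p.1.2], p.2 + 1) : List ℕ × ℕ)) := by
    refine Primrec.pair ?_ ?_
    · exact Primrec.list_append.comp (Primrec.fst.comp Primrec.fst)
        (Primrec.list_cons.comp
          (Primrec.nat_sub.comp Primrec.snd (Primrec.snd.comp Primrec.fst))
          (Primrec.const []))
    · exact Primrec.succ.comp Primrec.snd
  have h1 : Primrec (fun l : List ℕ =>
      l.foldl (fun (s : List ℕ × ℕ) m => (s.1 ++ [m - s.2], m + 1)) ([], 0)) :=
    Primrec.list_foldl Primrec.id (Primrec.const ([], 0)) (hstep.comp Primrec.snd).to₂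
  exact (Primrec.fst.comp h1).of_eq fun l => by rw [lower'_foldl]; simp

lemma primrec_fsList : Primrec fsList :=
  primrec_raise'.comp ((Primrec.ofNat (List ℕ)).comp primrec_encF)

lemma primrec_listToF : Primrec listToF :=
  (Primrec.ofNat (Finset ℕ)).comp
    (Primrec.encode.comp (primrec_lower'.comp primrec_sortD))

/-! ### The reduction -/

/-- One verification step: for input `(x, n, c)` with `c = Nat.pair a t`,
check that either `f (x, n) = none`, or `a` is a member of the output of `f (x, n)`
and `f (a, t)` outputs a finset (whose elements we return, as a list). -/
def stepFn (f : ℕ × ℕ → Option (Finset ℕ)) (q : ℕ × ℕ × ℕ) : Option (List ℕ) :=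
  Option.casesOn (f (q.1, q.2.1)) (some [])
    fun F => bif decide ((fsList F).idxOf q.2.2.unpair.1 < (fsList F).length)
      then Option.map fsList (f (q.2.2.unpair.1, q.2.2.unpair.2)) else none

lemma computable_stepFn {f : ℕ × ℕ → Option (Finset ℕ)} (hf : Computable f) :
    Computable (stepFn f) := by
  have h1 : Computable (fun q : ℕ × ℕ × ℕ => f (q.1, q.2.1)) :=
    hf.comp (Computable.pair Computable.fst (Computable.fst.comp Computable.snd))
  have hc : Computable (fun v : (ℕ × ℕ × ℕ) × Finset ℕ =>
      decide ((fsList v.2).idxOf v.1.2.2.unpair.1 < (fsList v.2).length)) :=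
    (primrec_memB.comp
      (Primrec.fst.comp (Primrec.unpair.comp
        (Primrec.snd.comp (Primrec.snd.comp Primrec.fst))))
      (primrec_fsList.comp Primrec.snd)).to_comp
  have hthen : Computable (fun v : (ℕ × ℕ × ℕ) × Finset ℕ =>
      Option.map fsList (f (v.1.2.2.unpair.1, v.1.2.2.unpair.2))) :=
    Computable.option_map
      (hf.comp (Computable.pair
        (Computable.fst.comp (Computable.unpair.comp
          (Computable.snd.comp (Computable.snd.comp Computable.fst))))
        (Computable.snd.comp (Computable.unpair.comp
          (Computable.snd.comp (Computable.snd.comp Computable.fst))))))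
      ((primrec_fsList.to_comp.comp Computable.snd).to₂)
  have hcond : Computable (fun v : (ℕ × ℕ × ℕ) × Finset ℕ =>
      bif decide ((fsList v.2).idxOf v.1.2.2.unpair.1 < (fsList v.2).length)
      then Option.map fsList (f (v.1.2.2.unpair.1, v.1.2.2.unpair.2)) else none) :=
    Computable.cond hc hthen (Computable.const none)
  exact Computable.option_casesOn h1 (Computable.const (some [])) hcond.to₂

/-- Accumulate the verification steps for all `n < m`. -/
def accFn (f : ℕ × ℕ → Option (Finset ℕ)) (p : ℕ × List ℕ) : ℕ → Option (List ℕ)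
  | 0 => some []
  | n + 1 => (accFn f p n).bind fun A =>
      (stepFn f (p.1, n, p.2.getD n 0)).map fun G => A ++ G

lemma computable_accFn {f : ℕ × ℕ → Option (Finset ℕ)} (hf : Computable f) :
    Computable (fun q : (ℕ × List ℕ) × ℕ => accFn f q.1 q.2) := by
  have hstepin : Computable
      (fun w : ((((ℕ × List ℕ) × ℕ) × (ℕ × Option (List ℕ)))) × List ℕ =>
        stepFn f (w.1.1.1.1, w.1.2.1, w.1.1.1.2.getD w.1.2.1 0)) :=
    (computable_stepFn hf).comp (Computable.pair
      (Computable.fst.comp (Computable.fst.comp (Computable.fst.comp Computable.fst)))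
      (Computable.pair
        (Computable.fst.comp (Computable.snd.comp Computable.fst))
        (((Primrec.list_getD 0).comp
          (Primrec.snd.comp (Primrec.fst.comp (Primrec.fst.comp Primrec.fst)))
          (Primrec.fst.comp (Primrec.snd.comp Primrec.fst))).to_comp)))
  have happ : Computable
      (fun u : (((((ℕ × List ℕ) × ℕ) × (ℕ × Option (List ℕ)))) × List ℕ) × List ℕ =>
        u.1.2 ++ u.2) :=
    Computable.list_append.comp (Computable.snd.comp Computable.fst) Computable.snd
  have hmap : Computable
      (fun w : ((((ℕ × List ℕ) × ℕ) × (ℕ × Option (List ℕ)))) × List ℕ =>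
        (stepFn f (w.1.1.1.1, w.1.2.1, w.1.1.1.2.getD w.1.2.1 0)).map
          fun G => w.2 ++ G) :=
    Computable.option_map hstepin happ.to₂
  have hbind : Computable
      (fun z : (((ℕ × List ℕ) × ℕ) × (ℕ × Option (List ℕ))) =>
        z.2.2.bind fun A =>
          (stepFn f (z.1.1.1, z.2.1, z.1.1.2.getD z.2.1 0)).map fun G => A ++ G) :=
    Computable.option_bind (Computable.snd.comp Computable.snd) hmap.to₂
  have main := Computable.nat_rec (Computable.snd :
      Computable fun q : (ℕ × List ℕ) × ℕ => q.2)
    (Computable.const (some ([] : List ℕ))) hbind.to₂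
  apply main.of_eq
  rintro ⟨p, m⟩
  induction m with
  | zero => rfl
  | succ m ih => simp only [accFn, ← ih]

/-- The reduction function witnessing that the graph of the modulus is
enumeration reducible to `X`. -/
def hFn (f : ℕ × ℕ → Option (Finset ℕ)) (p : ℕ × ℕ) : Option (Finset ℕ) :=
  (accFn f (p.1.unpair.1, ofNat (List ℕ) p.2) p.1.unpair.2).bind fun A =>
    (f (p.1.unpair.1, p.1.unpair.2)).map fun F => listToF (A ++ fsList F)

lemma computable_hFn {f : ℕ × ℕ → Option (Finset ℕ)} (hf : Computable f) :
    Computable (hFn f) := by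
  have hacc : Computable (fun p : ℕ × ℕ =>
      accFn f (p.1.unpair.1, ofNat (List ℕ) p.2) p.1.unpair.2) :=
    (computable_accFn hf).comp (Computable.pair
      (Computable.pair
        (Computable.fst.comp (Computable.unpair.comp Computable.fst))
        ((Computable.ofNat (List ℕ)).comp Computable.snd))
      (Computable.snd.comp (Computable.unpair.comp Computable.fst)))
  have hfm : Computable (fun w : (ℕ × ℕ) × List ℕ =>
      f (w.1.1.unpair.1, w.1.1.unpair.2)) :=
    hf.comp (Computable.pair
      (Computable.fst.comp (Computable.unpair.comp (Computable.fst.comp Computable.fst)))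
      (Computable.snd.comp (Computable.unpair.comp (Computable.fst.comp Computable.fst))))
  have hout : Computable (fun v : ((ℕ × ℕ) × List ℕ) × Finset ℕ =>
      listToF (v.1.2 ++ fsList v.2)) :=
    (primrec_listToF.comp
      (Primrec.list_append.comp (Primrec.snd.comp Primrec.fst)
        (primrec_fsList.comp Primrec.snd))).to_comp
  have hmap : Computable (fun w : (ℕ × ℕ) × List ℕ =>
      (f (w.1.1.unpair.1, w.1.1.unpair.2)).map fun F => listToF (w.2 ++ fsList F)) :=
    Computable.option_map hfm hout.to₂
  exact Computable.option_bind hacc hmap.to₂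

/-! ### Correctness -/

variable {X : Set ℕ} {f : ℕ × ℕ → Option (Finset ℕ)}

lemma step_sound (hX : ∀ a : ℕ, a ∈ Xᶜ ↔ ∃ t : ℕ, ∃ G : Finset ℕ, f (a, t) = some G ∧ ↑G ⊆ X)
    {x n c : ℕ} {G : List ℕ} (h : stepFn f (x, n, c) = some G) (hG : ∀ b ∈ G, b ∈ X) :
    ¬ ∃ F : Finset ℕ, f (x, n) = some F ∧ ↑F ⊆ X := by
  rintro ⟨F, hFn', hFX⟩
  unfold stepFn at h
  simp only [hFn'] at h
  set a := (Nat.unpair c).1 with ha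
  set t := (Nat.unpair c).2 with ht
  cases hb : decide ((fsList F).idxOf a < (fsList F).length) with
  | false => rw [hb] at h; simp at h
  | true =>
    rw [hb] at h
    simp only [cond_true, Option.map_eq_some_iff] at h
    obtain ⟨G', hG', rfl⟩ := h
    have haF : a ∈ F := mem_fsList.1 (List.idxOf_lt_length_iff.1 (of_decide_eq_true hb))
    have haX : a ∈ Xᶜ := (hX a).2 ⟨t, G', hG', fun b hb' => hG b (mem_fsList.2 hb')⟩
    exact haX (hFX haF)

lemma step_complete (hX : ∀ a : ℕ, a ∈ Xᶜ ↔ ∃ t : ℕ, ∃ G : Finset ℕ, f (a, t) = some G ∧ ↑G ⊆ X)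
    {x n : ℕ} (h : ¬ ∃ F : Finset ℕ, f (x, n) = some F ∧ ↑F ⊆ X) :
    ∃ c : ℕ, ∃ G : List ℕ, stepFn f (x, n, c) = some G ∧ ∀ b ∈ G, b ∈ X := by
  cases hfx : f (x, n) with
  | none => exact ⟨0, [], by simp [stepFn, hfx], by simp⟩
  | some F =>
    have hns : ¬ (↑F : Set ℕ) ⊆ X := fun hs => h ⟨F, hfx, hs⟩
    obtain ⟨a, haF, haX⟩ := Set.not_subset.1 hns
    obtain ⟨t, G', hG', hG'X⟩ := (hX a).1 haX
    refine ⟨Nat.pair a t, fsList G', ?_, fun b hb => hG'X (mem_fsList.1 hb)⟩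
    have hmem : a ∈ fsList F := mem_fsList.2 haF
    unfold stepFn
    simp only [hfx, Nat.unpair_pair]
    rw [decide_eq_true (List.idxOf_lt_length_iff.2 hmem)]
    simp [hG']

lemma acc_sound {x : ℕ} {L : List ℕ} : ∀ {m : ℕ} {A : List ℕ},
    (∀ a : ℕ, a ∈ Xᶜ ↔ ∃ t : ℕ, ∃ G : Finset ℕ, f (a, t) = some G ∧ ↑G ⊆ X) →
    accFn f (x, L) m = some A → (∀ b ∈ A, b ∈ X) →
    ∀ n < m, ¬ ∃ F : Finset ℕ, f (x, n) = some F ∧ ↑F ⊆ X := by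
  intro m
  induction m with
  | zero => intro A _ _ _ n hn; omega
  | succ m ih =>
    intro A hX h hA n hn
    simp only [accFn, Option.bind_eq_some_iff, Option.map_eq_some_iff] at h
    obtain ⟨A', hA', G, hG, rfl⟩ := h
    rcases Nat.lt_succ_iff_lt_or_eq.1 hn with hn' | rfl
    · exact ih hX hA' (fun b hb => hA b (List.mem_append_left _ hb)) n hn'
    · exact step_sound hX hG (fun b hb => hA b (List.mem_append_right _ hb))

lemma acc_congr {x : ℕ} {L L' : List ℕ} : ∀ {m : ℕ},
    (∀ n < m, L.getD n 0 = L'.getD n 0) → accFn f (x, L) m = accFn f (x, L') m := by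
  intro m
  induction m with
  | zero => intro _; rfl
  | succ m ih =>
    intro h
    simp only [accFn]
    rw [ih (fun n hn => h n (hn.trans (Nat.lt_succ_self m))), h m (Nat.lt_succ_self m)]

lemma acc_complete (hX : ∀ a : ℕ, a ∈ Xᶜ ↔ ∃ t : ℕ, ∃ G : Finset ℕ, f (a, t) = some G ∧ ↑G ⊆ X)
    {x : ℕ} : ∀ {m : ℕ}, (∀ n < m, ¬ ∃ F : Finset ℕ, f (x, n) = some F ∧ ↑F ⊆ X) →
    ∃ L A : List ℕ, accFn f (x, L) m = some A ∧ ∀ b ∈ A, b ∈ X := by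
  intro m
  induction m with
  | zero => exact fun _ => ⟨[], [], rfl, by simp⟩
  | succ m ih =>
    intro h
    obtain ⟨L, A, hacc, hA⟩ := ih (fun n hn => h n (hn.trans (Nat.lt_succ_self m)))
    obtain ⟨c, G, hstep, hG⟩ := step_complete hX (h m (Nat.lt_succ_self m))
    refine ⟨(List.range m).map (fun n => L.getD n 0) ++ [c], A ++ G, ?_, ?_⟩
    · have hlen : ((List.range m).map (fun n => L.getD n 0)).length = m := by simp
      have hgetlt : ∀ n < m,
          (((List.range m).map (fun n => L.getD n 0) ++ [c]).getD n 0) = L.getD n 0 := by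
        intro n hn
        rw [List.getD_eq_getElem?_getD, List.getElem?_append_left (by omega),
          List.getElem?_map]
        simp [List.getElem?_range hn]
      have hgetm : (((List.range m).map (fun n => L.getD n 0) ++ [c]).getD m 0) = c := by
        rw [List.getD_eq_getElem?_getD, List.getElem?_append_right (by omega)]
        simp [hlen]
      simp only [accFn]
      rw [← acc_congr (fun n hn => (hgetlt n hn).symm), hacc, hgetm, hstep]
      rfl
    · intro b hb
      rcases List.mem_append.1 hb with hb | hb
      · exact hA b hb
      · exact hG b hb

end ModAux

/-- The graph of the modulus function `g` (least `n` with `f (x, n) = some F`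
and `↑F ⊆ X`), coded via `Nat.pair`, is enumeration reducible to `X`. -/
theorem modulus_graph_enumRed (X : Set ℕ) (f : ℕ × ℕ → Option (Finset ℕ))
    (hf : EnumRedVia Xᶜ X f) :
    EnumRed
      {k : ℕ | ∃ x m : ℕ, k = Nat.pair x m ∧
        (∃ F : Finset ℕ, f (x, m) = some F ∧ ↑F ⊆ X) ∧
        (∀ n < m, ¬ ∃ F : Finset ℕ, f (x, n) = some F ∧ ↑F ⊆ X)}
      X := by
  obtain ⟨hfc, hX⟩ := hf
  refine ⟨ModAux.hFn f, ModAux.computable_hFn hfc, fun k => ?_⟩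
  constructor
  · rintro ⟨x, m, rfl, ⟨F, hFm, hFX⟩, hmin⟩
    obtain ⟨L, A, hacc, hA⟩ := ModAux.acc_complete hX hmin
    refine ⟨Encodable.encode L, ModAux.listToF (A ++ ModAux.fsList F), ?_, ?_⟩
    · unfold ModAux.hFn
      simp only [Nat.unpair_pair, Denumerable.ofNat_encode]
      rw [hacc, hFm]
      rfl
    · intro b hb
      rw [Finset.mem_coe, ModAux.mem_listToF] at hb
      rcases List.mem_append.1 hb with hb | hb
      · exact hA b hb
      · exact hFX (ModAux.mem_fsList.1 hb)
  · rintro ⟨s, H, hH, hHX⟩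
    unfold ModAux.hFn at hH
    simp only [Option.bind_eq_some_iff, Option.map_eq_some_iff] at hH
    obtain ⟨A, hacc, F, hFm, rfl⟩ := hH
    refine ⟨k.unpair.1, k.unpair.2, (Nat.pair_unpair k).symm, ⟨F, hFm, ?_⟩, ?_⟩
    · intro b hb
      exact hHX (by
        rw [Finset.mem_coe, ModAux.mem_listToF]
        exact List.mem_append_right _ (ModAux.mem_fsList.2 hb))
    · exact ModAux.acc_sound hX hacc (fun b hb => hHX (by
        rw [Finset.mem_coe, ModAux.mem_listToF]
        exact List.mem_append_left _ hb))
end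

section
/- Let X ⊆ ℕ and let f : ℕ × ℕ → Option (Finset ℕ) be computable with Xᶜ ≤ₑ^f X, and define the partial function g by: g(x) is the least n such that ∃ F : Finset ℕ, f (x, n) = some F ∧ ↑F ⊆ X (undefined if no such n exists). Let h : ℕ → ℕ be any total function such that g(x) ≤ h(x) whenever g(x) is defined, and let H = { Nat.pair x (h x) | x : ℕ } ⊆ ℕ. Then X ≤ₑ H ⊕ Xᶜ, where the join is A ⊕ B = { 2 * n | n ∈ A } ∪ { 2 * n + 1 | n ∈ B }. -/
set_option maxHeartbeats 1000000

namespace EnumRedAux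

open Denumerable

/-- The list of elements of the `Finset ℕ` encoded (in the `Denumerable` encoding) by `e`. -/
def jToL (e : ℕ) : List ℕ := raise' (ofNat (List ℕ) e) 0

/-- The encoding of a `Finset ℕ` used by the `Primcodable` instance. -/
def jE : Finset ℕ → ℕ := @Encodable.encode (Finset ℕ) Primcodable.toEncodable

theorem ofNat_jE (G : Finset ℕ) : ofNat (Finset ℕ) (jE G) = G := ofNat_encode G

theorem jE_computable : Computable jE := Computable.encode

theorem mem_jToL (m e : ℕ) : m ∈ jToL e ↔ m ∈ ofNat (Finset ℕ) e := by
  rw [show ofNat (Finset ℕ) e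
    = Finset.map (eqv ℕ).symm.toEmbedding (raise'Finset (ofNat (List ℕ) e) 0) from rfl]
  have hsymm : ∀ m : ℕ, (eqv ℕ).symm m = m := fun m => by simp [Denumerable.eqv]
  simp only [raise'Finset, Finset.mem_map, Finset.mem_mk, Multiset.mem_coe]
  constructor
  · intro hm; exact ⟨m, hm, hsymm m⟩
  · rintro ⟨a, ha, rfl⟩
    show (eqv ℕ).symm a ∈ jToL e; rw [hsymm a]; exact ha

theorem mem_jToL_jE (m : ℕ) (G : Finset ℕ) : m ∈ jToL (jE G) ↔ m ∈ G := by
  rw [mem_jToL, ofNat_jE]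

theorem raise'_primrec : Primrec₂ raise' := by
  have hfold : Primrec₂ fun (l : List ℕ) (n : ℕ) =>
      (l.foldl (fun (s : ℕ × List ℕ) (m : ℕ) => (m + s.1 + 1, s.2 ++ [m + s.1])) (n, [])).2 := by
    apply Primrec₂.mk
    refine Primrec.snd.comp ?_
    have := Primrec.list_foldl (α := List ℕ × ℕ) (β := ℕ) (σ := ℕ × List ℕ)
      (f := fun p => p.1) (g := fun p => (p.2, ([] : List ℕ)))
      (h := fun _ q => (q.2 + q.1.1 + 1, q.1.2 ++ [q.2 + q.1.1]))
      Primrec.fst (Primrec.pair Primrec.snd (Primrec.const []))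
      ?_
    · exact this
    · apply Primrec₂.mk
      have hb : Primrec fun q : (List ℕ × ℕ) × (ℕ × List ℕ) × ℕ => q.2.2 + q.2.1.1 :=
        Primrec.nat_add.comp (Primrec.snd.comp .snd) (Primrec.fst.comp (Primrec.fst.comp .snd))
      exact (Primrec.pair (Primrec.succ.comp hb)
        (Primrec.list_concat.comp (Primrec.snd.comp (Primrec.fst.comp .snd)) hb)).comp
        Primrec.id |>.of_eq fun q => by simp
  refine hfold.of_eq fun l n => ?_
  suffices H : ∀ (l : List ℕ) (n : ℕ) (acc : List ℕ),
      (l.foldl (fun (s : ℕ × List ℕ) (m : ℕ) => (m + s.1 + 1, s.2 ++ [m + s.1])) (n, acc)).2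
        = acc ++ raise' l n by
    simpa using H l n []
  intro l
  induction l with
  | nil => intro n acc; simp [raise']
  | cons m l ih => intro n acc; simp [raise', ih, List.append_assoc]

theorem jToL_computable : Computable jToL :=
  (raise'_primrec.to_comp.comp (Computable.ofNat (List ℕ)) (Computable.const 0)).of_eq
    fun e => rfl

attribute [irreducible] jToL jE

def jStep (f : ℕ × ℕ → Option (Finset ℕ)) (x : ℕ) (lg : List ℕ) (n : ℕ) : Bool :=
  Option.casesOn (f (x, n)) true fun F => decide (∃ m ∈ jToL (jE F), 2 * m + 1 ∈ lg)

theorem jStep_computable {f : ℕ × ℕ → Option (Finset ℕ)} (hf : Computable f) :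
    Computable₂ fun (a : (ℕ × ℕ) × ℕ) (n : ℕ) => jStep f a.1.1 (jToL a.2) n := by
  have pmem : Primrec fun p : ℕ × List ℕ => decide (p.1 ∈ p.2) := by
    have h : Primrec fun p : ℕ × List ℕ => decide (List.idxOf p.1 p.2 < p.2.length) :=
      (Primrec.nat_lt.comp (Primrec.list_idxOf.comp .fst .snd) (Primrec.list_length.comp .snd)).decide
    exact h.of_eq fun p => by simp [List.idxOf_lt_length_iff]
  have pex : Primrec fun q : List ℕ × List ℕ => decide (∃ m ∈ q.1, 2 * m + 1 ∈ q.2) := by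
    have h : Primrec fun q : List ℕ × List ℕ =>
        decide (List.findIdx (fun m => decide (2 * m + 1 ∈ q.2)) q.1 < q.1.length) := by
      have hfi : Primrec fun q : List ℕ × List ℕ =>
          List.findIdx (fun m => decide (2 * m + 1 ∈ q.2)) q.1 :=
        Primrec.list_findIdx .fst
          (Primrec₂.mk (pmem.comp
            (Primrec.pair (Primrec.nat_double_succ.comp .snd) (Primrec.snd.comp .fst))))
      exact (Primrec.nat_lt.comp hfi (Primrec.list_length.comp .fst)).decide
    exact h.of_eq fun q => by simp [List.findIdx_lt_length]
  apply Computable₂.mk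
  have ho : Computable fun b : ((ℕ × ℕ) × ℕ) × ℕ => f (b.1.1.1, b.2) :=
    hf.comp (Computable.pair (Computable.fst.comp (Computable.fst.comp .fst)) .snd)
  have hg : Computable₂ fun (b : ((ℕ × ℕ) × ℕ) × ℕ) (F : Finset ℕ) =>
      decide (∃ m ∈ jToL (jE F), 2 * m + 1 ∈ jToL b.1.2) :=
    Computable₂.mk (pex.to_comp.comp (Computable.pair
      (jToL_computable.comp (jE_computable.comp .snd))
      (jToL_computable.comp (Computable.snd.comp (Computable.fst.comp .fst)))))
  exact (Computable.option_casesOn ho (Computable.const true) hg).of_eq fun b => by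
    rcases hv : f (b.1.1.1, b.2) with _ | F <;> simp [jStep, hv]

theorem pmem_primrec : Primrec fun p : ℕ × List ℕ => decide (p.1 ∈ p.2) := by
  have h : Primrec fun p : ℕ × List ℕ => decide (List.idxOf p.1 p.2 < p.2.length) :=
    (Primrec.nat_lt.comp (Primrec.list_idxOf.comp .fst .snd) (Primrec.list_length.comp .snd)).decide
  exact h.of_eq fun p => by simp [List.idxOf_lt_length_iff]

theorem jStep_none {f : ℕ × ℕ → Option (Finset ℕ)} {x : ℕ} {n : ℕ} (lg : List ℕ)
    (hv : f (x, n) = none) : jStep f x lg n = true := by simp [jStep, hv]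

theorem jStep_some {f : ℕ × ℕ → Option (Finset ℕ)} {x : ℕ} {n : ℕ} {F : Finset ℕ} (lg : List ℕ)
    (hv : f (x, n) = some F) :
    (jStep f x lg n = true) ↔ ∃ m ∈ jToL (jE F), 2 * m + 1 ∈ lg := by simp [jStep, hv]

attribute [irreducible] jStep

def jLoop (f : ℕ × ℕ → Option (Finset ℕ)) (x : ℕ) (lg : List ℕ) : ℕ → Bool
  | 0 => jStep f x lg 0
  | k + 1 => jLoop f x lg k && jStep f x lg (k + 1)

theorem jLoop_eq_true (f : ℕ × ℕ → Option (Finset ℕ)) (x : ℕ) (lg : List ℕ) :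
    ∀ k, jLoop f x lg k = true ↔ ∀ n ≤ k, jStep f x lg n = true := by
  intro k
  induction k with
  | zero => simp [jLoop, Nat.le_zero]
  | succ k ih =>
    simp only [jLoop, Bool.and_eq_true, ih]
    constructor
    · rintro ⟨h1, h2⟩ n hn
      rcases Nat.le_succ_iff.mp hn with hn' | hn'
      · exact h1 n hn'
      · subst hn'; exact h2
    · intro H
      exact ⟨fun n hn => H n (hn.trans (Nat.le_succ _)), H _ le_rfl⟩

theorem jLoop_computable {f : ℕ × ℕ → Option (Finset ℕ)} (hf : Computable f) :
    Computable fun a : (ℕ × ℕ) × ℕ => jLoop f a.1.1 (jToL a.2) a.1.2 := by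
  have hstep := jStep_computable hf
  have hk : Computable fun a : (ℕ × ℕ) × ℕ => a.1.2 :=
    Computable.snd.comp .fst
  have hg : Computable fun a : (ℕ × ℕ) × ℕ => jStep f a.1.1 (jToL a.2) 0 :=
    hstep.comp .id (Computable.const 0)
  have hh : Computable₂ fun (a : (ℕ × ℕ) × ℕ) (p : ℕ × Bool) =>
      (p.2 && jStep f a.1.1 (jToL a.2) (p.1 + 1)) := by
    apply Computable₂.mk
    exact (Primrec.dom_bool₂ (· && ·)).to_comp.comp
      (Computable.snd.comp .snd)
      (hstep.comp .fst (Computable.succ.comp (Computable.fst.comp .snd)))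
  have := Computable.nat_rec hk hg hh
  refine this.of_eq fun a => ?_
  generalize a.1.2 = k
  induction k with
  | zero => simp [jLoop]
  | succ k ih => simp only [jLoop, ih]

attribute [irreducible] jLoop

def jF (f : ℕ × ℕ → Option (Finset ℕ)) (p : ℕ × ℕ) : Option (Finset ℕ) :=
  cond (decide ((2 * Nat.pair p.1 p.2.unpair.1) ∈ jToL p.2.unpair.2)
      && jLoop f p.1 (jToL p.2.unpair.2) p.2.unpair.1)
    (some (ofNat (Finset ℕ) p.2.unpair.2)) none

theorem jF_computable {f : ℕ × ℕ → Option (Finset ℕ)} (hf : Computable f) :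
    Computable (jF f) := by
  have hmemb : Computable fun a : (ℕ × ℕ) × ℕ =>
      decide ((2 * Nat.pair a.1.1 a.1.2) ∈ jToL a.2) := by
    refine pmem_primrec.to_comp.comp (Computable.pair ?_ (jToL_computable.comp .snd))
    exact (Primrec.nat_double.comp (Primrec₂.natPair.comp (Primrec.fst.comp .fst)
      (Primrec.snd.comp .fst))).to_comp
  have hb : Computable fun a : (ℕ × ℕ) × ℕ =>
      (decide ((2 * Nat.pair a.1.1 a.1.2) ∈ jToL a.2)
        && jLoop f a.1.1 (jToL a.2) a.1.2) :=
    (Primrec.dom_bool₂ (· && ·)).to_comp.comp hmemb (jLoop_computable hf)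
  have hbody : Computable fun a : (ℕ × ℕ) × ℕ =>
      cond (decide ((2 * Nat.pair a.1.1 a.1.2) ∈ jToL a.2)
          && jLoop f a.1.1 (jToL a.2) a.1.2)
        (some (ofNat (Finset ℕ) a.2)) none :=
    Computable.cond hb (Computable.option_some.comp ((Computable.ofNat _).comp .snd))
      (Computable.const none)
  have hpack : Computable fun p : ℕ × ℕ => ((p.1, p.2.unpair.1), p.2.unpair.2) :=
    Computable.pair (Computable.pair .fst
      (Computable.fst.comp (Computable.unpair.comp .snd)))
      (Computable.snd.comp (Computable.unpair.comp .snd))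
  exact (hbody.comp hpack).of_eq fun p => rfl

end EnumRedAux
/-- The recursive join `A ⊕ B`. -/
def SetJoin (A B : Set ℕ) : Set ℕ :=
  {k : ℕ | ∃ n ∈ A, k = 2 * n} ∪ {k : ℕ | ∃ n ∈ B, k = 2 * n + 1}

open EnumRedAux in
/-- If `h` dominates the modulus function `g` of the reduction `Xᶜ ≤ₑ^f X`
(i.e. `g x ≤ h x` whenever `g x` is defined), then `X` is enumeration
reducible to the join of the graph of `h` and `Xᶜ`. -/
theorem enumRed_of_modulus_bound (X : Set ℕ) (f : ℕ × ℕ → Option (Finset ℕ))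
    (hf : EnumRedVia Xᶜ X f) (h : ℕ → ℕ)
    (hh : ∀ x m : ℕ,
      (∃ F : Finset ℕ, f (x, m) = some F ∧ ↑F ⊆ X) →
      (∀ n < m, ¬ ∃ F : Finset ℕ, f (x, n) = some F ∧ ↑F ⊆ X) →
      m ≤ h x) :
    EnumRed X (SetJoin {k : ℕ | ∃ x : ℕ, k = Nat.pair x (h x)} Xᶜ) := by
  classical
  obtain ⟨hfc, hfiff⟩ := hf
  refine ⟨jF f, jF_computable hfc, fun x => ?_⟩
  constructor
  · -- forward direction
    intro hx
    have hpickex : ∀ n : ℕ, ∃ g : ℕ,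
        (g = 2 * Nat.pair x (h x) ∨ ∃ m, m ∉ X ∧ g = 2 * m + 1) ∧
        (∀ F : Finset ℕ, f (x, n) = some F → ∃ m ∈ F, m ∉ X ∧ g = 2 * m + 1) := by
      intro n
      rcases hv : f (x, n) with _ | F
      · exact ⟨2 * Nat.pair x (h x), Or.inl rfl, fun F hF => by simp at hF⟩
      · have hns : ¬ (↑F : Set ℕ) ⊆ X := by
          intro hFX
          have : x ∈ Xᶜ := (hfiff x).mpr ⟨n, F, hv, hFX⟩
          exact this hx
        obtain ⟨m, hmF, hmX⟩ := Set.not_subset.mp hns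
        refine ⟨2 * m + 1, Or.inr ⟨m, hmX, rfl⟩, fun F' hF' => ?_⟩
        have : F' = F := by simpa using hF'.symm
        subst this
        exact ⟨m, hmF, hmX, rfl⟩
    choose pick hpick1 hpick2 using hpickex
    set G : Finset ℕ :=
      insert (2 * Nat.pair x (h x)) ((Finset.range (h x + 1)).image pick) with hG
    have hGJ : (↑G : Set ℕ) ⊆
        SetJoin {k : ℕ | ∃ x : ℕ, k = Nat.pair x (h x)} Xᶜ := by
      intro g hg
      rw [Finset.mem_coe, hG, Finset.mem_insert] at hg
      rcases hg with rfl | hg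
      · exact Or.inl ⟨Nat.pair x (h x), ⟨x, rfl⟩, rfl⟩
      · obtain ⟨n, _, rfl⟩ := Finset.mem_image.mp hg
        rcases hpick1 n with heq | ⟨m, hmX, heq⟩
        · rw [heq]; exact Or.inl ⟨Nat.pair x (h x), ⟨x, rfl⟩, rfl⟩
        · rw [heq]; exact Or.inr ⟨m, hmX, rfl⟩
    have h1 : (2 * Nat.pair x (h x)) ∈ jToL (jE G) :=
      (mem_jToL_jE _ _).mpr (Finset.mem_insert_self _ _)
    have h2 : jLoop f x (jToL (jE G)) (h x) = true := by
      rw [jLoop_eq_true]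
      intro n hn
      rcases hv : f (x, n) with _ | F
      · exact jStep_none _ hv
      · obtain ⟨m, hmF, hmX, hgeq⟩ := hpick2 n F hv
        rw [jStep_some _ hv]
        refine ⟨m, (mem_jToL_jE _ _).mpr hmF, (mem_jToL_jE _ _).mpr ?_⟩
        rw [hG, ← hgeq]
        exact Finset.mem_insert_of_mem
          (Finset.mem_image.mpr ⟨n, Finset.mem_range.mpr (by omega), rfl⟩)
    refine ⟨Nat.pair (h x) (jE G), G, ?_, hGJ⟩
    simp only [jF, Nat.unpair_pair]
    rw [ofNat_jE]
    simp [h1, h2]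
  · -- backward direction
    rintro ⟨c, G, hjf, hsub⟩
    simp only [jF] at hjf
    cases hcond : (decide ((2 * Nat.pair x c.unpair.1) ∈ jToL c.unpair.2)
        && jLoop f x (jToL c.unpair.2) c.unpair.1) with
    | false => rw [hcond] at hjf; simp at hjf
    | true =>
    rw [hcond] at hjf
    simp only [cond_true, Option.some.injEq] at hjf
    rw [Bool.and_eq_true] at hcond
    obtain ⟨hd1, hd2⟩ := hcond
    have hmem1 : (2 * Nat.pair x c.unpair.1) ∈ G := by
      rw [← hjf, ← mem_jToL]
      exact of_decide_eq_true hd1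
    have hkx : c.unpair.1 = h x := by
      rcases hsub (Finset.mem_coe.mpr hmem1) with ⟨n', ⟨x', hx'⟩, heq⟩ | ⟨m, _, heq⟩
      · have hn' : n' = Nat.pair x c.unpair.1 := by omega
        rw [hn'] at hx'
        have := congrArg Nat.unpair hx'
        simp only [Nat.unpair_pair, Prod.mk.injEq] at this
        rw [this.2, this.1]
      · omega
    by_contra hx
    have hex : ∃ n : ℕ, ∃ F : Finset ℕ, f (x, n) = some F ∧ ↑F ⊆ X := (hfiff x).mp hx
    obtain ⟨F₀, hF₀, hF₀X⟩ := Nat.find_spec hex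
    have hle : Nat.find hex ≤ h x :=
      hh x (Nat.find hex) ⟨F₀, hF₀, hF₀X⟩ fun n hn => Nat.find_min hex hn
    have hstep := (jLoop_eq_true f x _ _).mp hd2 (Nat.find hex) (by omega)
    rw [jStep_some _ hF₀] at hstep
    obtain ⟨m, hm1, hm2⟩ := hstep
    have hmF₀ : m ∈ F₀ := (mem_jToL_jE _ _).mp hm1
    have hmG : (2 * m + 1) ∈ G := by rw [← hjf, ← mem_jToL]; exact hm2
    rcases hsub (Finset.mem_coe.mpr hmG) with ⟨n', _, heq⟩ | ⟨m', hm'X, heq⟩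
    · omega
    · have : m = m' := by omega
      subst this
      exact hm'X (hF₀X (Finset.mem_coe.mpr hmF₀))
end

section
/- Let n : ℕ and let N be a normal subgroup of FreeGroup (Fin n) such that the quotient group FreeGroup (Fin n) ⧸ N is a simple group (IsSimpleGroup). Then the complement of the word problem W(N) is enumeration reducible to W(N): W(N)ᶜ ≤ₑ W(N). -/
/-- The word problem of the marked group `FreeGroup (Fin n) ⧸ N`: the set of
words over the generators and their inverses whose product lies in `N`. -/
def wordProblem (n : ℕ) (N : Subgroup (FreeGroup (Fin n))) :
    Set (List (Fin n × Bool)) :=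
  {l : List (Fin n × Bool) |
    (l.map (fun p => cond p.2 (FreeGroup.of p.1) (FreeGroup.of p.1)⁻¹)).prod ∈ N}

/-- The subset of `ℕ` corresponding to a set of encodable elements. -/
def encSet {α : Type*} [Encodable α] (A : Set α) : Set ℕ :=
  Encodable.encode '' A


open Encodable

namespace WPAux

variable {n : ℕ}

abbrev Word (n : ℕ) := List (Fin n × Bool)
abbrev Wit (n : ℕ) := List (List (Word n × Bool))

def term (p : Fin n × Bool) : FreeGroup (Fin n) :=
  cond p.2 (FreeGroup.of p.1) (FreeGroup.of p.1)⁻¹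

def eval (l : Word n) : FreeGroup (Fin n) := (l.map term).prod

@[simp] lemma eval_nil : eval ([] : Word n) = 1 := rfl

def invWord (l : Word n) : Word n := (l.map fun p => (p.1, !p.2)).reverse

def conjWord (w c : Word n) (b : Bool) : Word n := c ++ (cond b w (invWord w)) ++ invWord c

def prodWord (w : Word n) (t : List (Word n × Bool)) : Word n :=
  t.flatMap fun p => conjWord w p.1 p.2

def testWord (w : Word n) (t : Wit n) (i : Fin n) : Word n :=
  (i, true) :: invWord (prodWord w (t.getD i []))

lemma eval_append (l l' : Word n) : eval (l ++ l') = eval l * eval l' := by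
  simp [eval]

lemma eval_cons (p : Fin n × Bool) (l : Word n) : eval (p :: l) = term p * eval l := by
  simp [eval]

lemma eval_invWord (l : Word n) : eval (invWord l) = (eval l)⁻¹ := by
  induction l with
  | nil => simp [eval, invWord]
  | cons p l ih =>
    have : invWord (p :: l) = invWord l ++ [(p.1, !p.2)] := by simp [invWord]
    have h2 : eval [(p.1, !p.2)] = (term p)⁻¹ := by
      cases hb : p.2 <;> simp [eval, term, hb]
    rw [this, eval_append, ih, h2, eval_cons, mul_inv_rev]

lemma eval_surjective : Function.Surjective (eval (n := n)) := by
  intro g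
  induction g using FreeGroup.induction_on with
  | C1 => exact ⟨[], by simp [eval]⟩
  | of x => exact ⟨[(x, true)], by show term (x, true) * 1 = _; simp [term]⟩
  | inv_of x _ => exact ⟨[(x, false)], by show term (x, false) * 1 = _; simp [term]⟩
  | mul x y hx hy =>
    obtain ⟨l, hl⟩ := hx; obtain ⟨l', hl'⟩ := hy
    exact ⟨l ++ l', by rw [eval_append, hl, hl']⟩

section Group

variable (N : Subgroup (FreeGroup (Fin n))) [N.Normal]

lemma mem_wordProblem_iff (l : Word n) : l ∈ wordProblem n N ↔ eval l ∈ N := Iff.rfl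

lemma eval_conjWord (w c : Word n) (b : Bool) :
    eval (conjWord w c b) = eval c * (cond b (eval w) (eval w)⁻¹) * (eval c)⁻¹ := by
  cases b <;> simp [conjWord, eval_append, eval_invWord, mul_assoc]

lemma eval_prodWord_flip (w : Word n) (t : List (Word n × Bool)) :
    eval (prodWord w (t.reverse.map fun p => (p.1, !p.2))) = (eval (prodWord w t))⁻¹ := by
  induction t with
  | nil => simp [prodWord]
  | cons p t ih =>
    have h1 : prodWord w ((p :: t).reverse.map fun p => (p.1, !p.2))
        = prodWord w (t.reverse.map fun p => (p.1, !p.2)) ++ conjWord w p.1 (!p.2) := by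
      simp [prodWord]
    have h2 : prodWord w (p :: t) = conjWord w p.1 p.2 ++ prodWord w t := by
      simp [prodWord]
    have h3 : eval (conjWord w p.1 (!p.2)) = (eval (conjWord w p.1 p.2))⁻¹ := by
      cases hb : p.2 <;> simp [eval_conjWord, mul_assoc]
    rw [h1, h2, eval_append, eval_append, ih, h3, mul_inv_rev]

lemma prodWord_mem_ncl (w : Word n) (t : List (Word n × Bool)) :
    QuotientGroup.mk' N (eval (prodWord w t)) ∈
      Subgroup.normalClosure {QuotientGroup.mk' N (eval w)} := by
  set π := QuotientGroup.mk' N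
  induction t with
  | nil => simp [prodWord]
  | cons p t ih =>
    have h2 : prodWord w (p :: t) = conjWord w p.1 p.2 ++ prodWord w t := by
      simp [prodWord]
    rw [h2, eval_append, map_mul]
    refine mul_mem ?_ ih
    rw [eval_conjWord, map_mul, map_mul]
    have hg : π (eval w) ∈ Subgroup.normalClosure {π (eval w)} :=
      Subgroup.subset_normalClosure rfl
    have hgb : π (cond p.2 (eval w) (eval w)⁻¹) ∈ Subgroup.normalClosure {π (eval w)} := by
      cases p.2
      · simpa using inv_mem hg
      · simpa using hg
    have := Subgroup.normalClosure_normal (s := {π (eval w)})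
    simpa [map_inv] using this.conj_mem _ hgb (π (eval p.1))

lemma exists_prodWord (w : Word n) {g' : FreeGroup (Fin n) ⧸ N}
    (hg' : g' ∈ Subgroup.normalClosure {QuotientGroup.mk' N (eval w)}) :
    ∃ t : List (Word n × Bool), QuotientGroup.mk' N (eval (prodWord w t)) = g' := by
  set π := QuotientGroup.mk' N
  refine Subgroup.closure_induction ?_ ?_ ?_ ?_ hg'
  · intro y hy
    rcases Group.mem_conjugatesOfSet_iff.1 hy with ⟨a, ha, hconj⟩
    rcases isConj_iff.1 hconj with ⟨c, hc⟩
    rcases Set.mem_singleton_iff.1 ha with rfl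
    obtain ⟨cw, hcw⟩ : ∃ cw : Word n, π (eval cw) = c := by
      obtain ⟨x, hx⟩ := QuotientGroup.mk'_surjective N c
      obtain ⟨cw, hcw⟩ := eval_surjective x
      exact ⟨cw, by rw [hcw, hx]⟩
    refine ⟨[(cw, true)], ?_⟩
    have : prodWord w [(cw, true)] = conjWord w cw true := by simp [prodWord]
    rw [this, eval_conjWord]
    simp only [cond_true, map_mul, map_inv, hcw]
    exact hc
  · exact ⟨[], by simp [prodWord]⟩
  · rintro x y _ _ ⟨t₁, ht₁⟩ ⟨t₂, ht₂⟩
    refine ⟨t₁ ++ t₂, ?_⟩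
    have : prodWord w (t₁ ++ t₂) = prodWord w t₁ ++ prodWord w t₂ := by simp [prodWord]
    rw [this, eval_append, map_mul, ht₁, ht₂]
  · rintro x _ ⟨t, ht⟩
    exact ⟨t.reverse.map fun p => (p.1, !p.2), by rw [eval_prodWord_flip, map_inv, ht]⟩

set_option maxHeartbeats 1000000 in
/-- Main group-theoretic characterization. -/
theorem main_iff (hsimple : IsSimpleGroup (FreeGroup (Fin n) ⧸ N)) (w : Word n) :
    w ∉ wordProblem n N ↔ ∃ t : Wit n, ∀ i : Fin n, testWord w t i ∈ wordProblem n N := by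
  set π := QuotientGroup.mk' N with hπ
  have hker : ∀ x : FreeGroup (Fin n), π x = 1 ↔ x ∈ N := fun x =>
    QuotientGroup.eq_one_iff x
  constructor
  · intro hw
    have hg : π (eval w) ≠ 1 := fun h => hw ((hker _).1 h)
    have hncl : Subgroup.normalClosure {π (eval w)} = ⊤ := by
      rcases hsimple.eq_bot_or_eq_top_of_normal _
          (Subgroup.normalClosure_normal (s := {π (eval w)})) with h | h
      · have hmem : π (eval w) ∈ Subgroup.normalClosure {π (eval w)} :=
          Subgroup.subset_normalClosure rfl
        rw [h, Subgroup.mem_bot] at hmem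
        exact absurd hmem hg
      · exact h
    have hmem : ∀ i : Fin n, π (FreeGroup.of i) ∈ Subgroup.normalClosure {π (eval w)} := by
      intro i; rw [hncl]; trivial
    choose T hT using fun i : Fin n => exists_prodWord N w (hmem i)
    refine ⟨(List.finRange n).map T, fun i => ?_⟩
    have hget : (((List.finRange n).map T).getD (i : ℕ) []) = T i := by
      have hlt : (i : ℕ) < ((List.finRange n).map T).length := by simp [i.2]
      rw [List.getD_eq_getElem _ _ hlt]
      simp
    show eval (testWord w _ i) ∈ N
    rw [← hker]
    have : eval (testWord w ((List.finRange n).map T) i)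
        = FreeGroup.of i * (eval (prodWord w (T i)))⁻¹ := by
      rw [testWord, eval_cons, eval_invWord, hget]
      simp [term]
    rw [this, map_mul, map_inv, hT i, mul_inv_cancel]
  · rintro ⟨t, ht⟩ hw
    have hg1 : π (eval w) = 1 := (hker _).2 hw
    have hbot : Subgroup.normalClosure {π (eval w)} = ⊥ := by
      rw [hg1]
      exact le_bot_iff.1 (Subgroup.normalClosure_le_normal (by simp))
    have hof : ∀ i : Fin n, π (FreeGroup.of i) = 1 := by
      intro i
      have h1 : π (eval (testWord w t i)) = 1 := (hker _).2 (ht i)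
      have h2 : eval (testWord w t i)
          = FreeGroup.of i * (eval (prodWord w (t.getD (i : ℕ) [])))⁻¹ := by
        rw [testWord, eval_cons, eval_invWord]
        simp [term]
      have h3 := prodWord_mem_ncl N w (t.getD (i : ℕ) [])
      rw [hbot, Subgroup.mem_bot] at h3
      rw [h2, map_mul, map_inv, h3] at h1
      simpa using h1
    have hall : ∀ x : FreeGroup (Fin n), π x = 1 := by
      intro x
      induction x using FreeGroup.induction_on with
      | C1 => simp
      | of i => exact hof i
      | inv_of i h => rw [map_inv, h]; simp
      | mul a b ha hb => rw [map_mul, ha, hb, mul_one]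
    rcases hsimple.toNontrivial.exists_pair_ne with ⟨a, b, hab⟩
    obtain ⟨x, rfl⟩ := QuotientGroup.mk'_surjective N a
    obtain ⟨y, rfl⟩ := QuotientGroup.mk'_surjective N b
    exact hab ((hall x).trans (hall y).symm)

end Group

end WPAux

namespace WPAux

open Denumerable Primrec

variable {n : ℕ}

def testCodes (w : Word n) (t : Wit n) : List ℕ :=
  (List.finRange n).map fun i => encode (testWord w t i)

def raiseList (k : ℕ) : List ℕ := Denumerable.raise' (ofNat (List ℕ) k) 0

def memCheck (cs L : List ℕ) : Bool :=
  cs.foldl (fun b c => b && decide (L.idxOf c < L.length)) true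

def redF (n : ℕ) : ℕ × ℕ → Option (Finset ℕ) := fun q =>
  (decode (α := Word n) q.1).bind fun w =>
    if encode w = q.1 then
      (decode (α := Wit n × ℕ) q.2).bind fun tk =>
        cond (memCheck (testCodes w tk.1) (raiseList tk.2))
          (some (ofNat (Finset ℕ) tk.2)) none
    else none

-- Primrec lemmas

lemma primrec_invWord : Primrec (invWord (n := n)) :=
  list_reverse.comp <| list_map Primrec.id <|
    (Primrec.pair (fst.comp snd) (Primrec.not.comp (snd.comp snd)))

lemma primrec_conjWord :
    Primrec fun y : (Word n × List (Word n × Bool)) × (Word n × Bool) =>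
      conjWord y.1.1 y.2.1 y.2.2 :=
  list_append.comp
    (list_append.comp (fst.comp snd)
      (Primrec.cond (snd.comp snd) (fst.comp fst) (primrec_invWord.comp (fst.comp fst))))
    (primrec_invWord.comp (fst.comp snd))

lemma primrec_prodWord : Primrec₂ (prodWord (n := n)) :=
  list_flatMap snd primrec_conjWord

lemma primrec_testWord :
    Primrec fun x : (Word n × Wit n) × Fin n => testWord x.1.1 x.1.2 x.2 :=
  list_cons.comp (Primrec.pair snd (const true))
    (primrec_invWord.comp <| primrec_prodWord.comp (fst.comp fst) <|
      (list_getD []).comp (snd.comp fst) (fin_val.comp snd))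

lemma primrec_testCodes : Primrec₂ (testCodes (n := n)) :=
  list_map (const (List.finRange n)) (Primrec.encode.comp primrec_testWord)

lemma primrec_raiseList : Primrec raiseList := by
  have hfold : Primrec fun l : List ℕ =>
      (l.foldl (fun s c => (s.1 ++ [c + s.2], c + s.2 + 1)) (([] : List ℕ), 0)).1 :=
    fst.comp <| list_foldl Primrec.id (const (([] : List ℕ), 0))
      (show Primrec₂ fun (_ : List ℕ) (p : (List ℕ × ℕ) × ℕ) =>
          ((p.1.1 ++ [p.2 + p.1.2], p.2 + p.1.2 + 1) : List ℕ × ℕ) from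
        Primrec.pair
          (list_concat.comp (fst.comp (fst.comp snd))
            (nat_add.comp (snd.comp snd) (snd.comp (fst.comp snd))))
          (succ.comp (nat_add.comp (snd.comp snd) (snd.comp (fst.comp snd)))))
  have key : ∀ (l acc : List ℕ) (m : ℕ),
      (l.foldl (fun s c => (s.1 ++ [c + s.2], c + s.2 + 1)) (acc, m)).1
        = acc ++ Denumerable.raise' l m := by
    intro l
    induction l with
    | nil => intro acc m; simp [Denumerable.raise']
    | cons c l ih =>
      intro acc m
      rw [List.foldl_cons, Denumerable.raise']
      show (l.foldl _ (acc ++ [c + m], c + m + 1)).1 = _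
      rw [ih]
      simp
  have : Primrec fun l : List ℕ => Denumerable.raise' l 0 :=
    hfold.of_eq fun l => by rw [key]; simp
  exact this.comp (Primrec.ofNat (List ℕ))

lemma primrec_memCheck : Primrec₂ memCheck := by
  have h : Primrec fun x : (List ℕ × List ℕ) × (Bool × ℕ) =>
      decide (x.1.2.idxOf x.2.2 < x.1.2.length) :=
    nat_lt.comp (list_idxOf.comp (snd.comp snd) (snd.comp fst))
      (list_length.comp (snd.comp fst)) |>.decide
  exact list_foldl fst (const true)
    (show Primrec₂ fun (x : List ℕ × List ℕ) (p : Bool × ℕ) =>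
        (p.1 && decide (x.2.idxOf p.2 < x.2.length)) from
      (Primrec.cond (fst.comp snd) h (const false)).of_eq fun x => by
        cases hx : x.2.1 <;> simp [hx])

lemma primrec_redF : Primrec (redF n) := by
  have hcheck : Primrec fun p : ((ℕ × ℕ) × Word n) × (Wit n × ℕ) =>
      memCheck (testCodes p.1.2 p.2.1) (raiseList p.2.2) :=
    primrec_memCheck.comp
      (primrec_testCodes.comp (snd.comp fst) (fst.comp snd))
      (primrec_raiseList.comp (snd.comp snd))
  have P3 : Primrec₂ fun (p : (ℕ × ℕ) × Word n) (tk : Wit n × ℕ) =>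
      cond (memCheck (testCodes p.2 tk.1) (raiseList tk.2))
        (some (ofNat (Finset ℕ) tk.2)) none :=
    Primrec.cond hcheck
      (option_some.comp ((Primrec.ofNat (Finset ℕ)).comp (snd.comp snd)))
      (const none)
  have P2 : Primrec fun p : (ℕ × ℕ) × Word n =>
      (decode (α := Wit n × ℕ) p.1.2).bind fun tk =>
        cond (memCheck (testCodes p.2 tk.1) (raiseList tk.2))
          (some (ofNat (Finset ℕ) tk.2)) none :=
    option_bind (Primrec.decode.comp (snd.comp fst)) P3
  have P1 : Primrec₂ fun (q : ℕ × ℕ) (w : Word n) =>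
      if encode w = q.1 then
        (decode (α := Wit n × ℕ) q.2).bind fun tk =>
          cond (memCheck (testCodes w tk.1) (raiseList tk.2))
            (some (ofNat (Finset ℕ) tk.2)) none
      else none :=
    Primrec.ite (Primrec.eq.comp (Primrec.encode.comp snd) (fst.comp fst))
      P2 (const none)
  exact option_bind (Primrec.decode.comp fst) P1

-- correctness lemmas

lemma memCheck_iff (cs L : List ℕ) : memCheck cs L = true ↔ ∀ c ∈ cs, c ∈ L := by
  have key : ∀ (cs : List ℕ) (b : Bool),
      cs.foldl (fun b c => b && decide (L.idxOf c < L.length)) b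
        = (b && cs.all fun c => decide (L.idxOf c < L.length)) := by
    intro cs
    induction cs with
    | nil => simp
    | cons c cs ih => intro b; simp [ih, Bool.and_assoc]
  rw [memCheck, key]
  simp [List.all_eq_true, List.idxOf_lt_length_iff]

lemma mem_ofNat_finset {c k : ℕ} : c ∈ ofNat (Finset ℕ) k ↔ c ∈ raiseList k := by
  have h : ofNat (Finset ℕ) k
      = Finset.map (Denumerable.eqv ℕ).symm.toEmbedding
          (Denumerable.raise'Finset (ofNat (List ℕ) k) 0) :=
    ofNat_of_decode rfl
  rw [h]
  simp [Finset.mem_map, Denumerable.raise'Finset, Denumerable.eqv, raiseList,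
    Finset.mem_mk]
  exact Iff.rfl

def encodeFinset (S : Finset ℕ) : ℕ :=
  @Encodable.encode (Finset ℕ) Denumerable.toEncodable S

lemma ofNat_encodeFinset (S : Finset ℕ) :
    Denumerable.ofNat (Finset ℕ) (encodeFinset S) = S :=
  Denumerable.ofNat_encode S

end WPAux

open WPAux

/-- For a finitely generated simple group, the complement of the word problem is
enumeration reducible to the word problem. -/
theorem compl_wordProblem_enumRed_of_simple (n : ℕ)
    (N : Subgroup (FreeGroup (Fin n))) [N.Normal]
    (hsimple : IsSimpleGroup (FreeGroup (Fin n) ⧸ N)) :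
    EnumRed (encSet (wordProblem n N)ᶜ) (encSet (wordProblem n N)) := by
  classical
  refine ⟨redF n, primrec_redF.to_comp, fun x => ?_⟩
  constructor
  · rintro ⟨w, hw, rfl⟩
    obtain ⟨t, ht⟩ := (main_iff N hsimple w).1 hw
    set S : Finset ℕ := (testCodes w t).toFinset with hS
    refine ⟨Encodable.encode ((t, encodeFinset S) : Wit n × ℕ), S, ?_, ?_⟩
    · have hcheck : memCheck (testCodes w t) (raiseList (encodeFinset S)) = true := by
        rw [memCheck_iff]
        intro c hc
        rw [← mem_ofNat_finset, ofNat_encodeFinset]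
        simpa [hS] using hc
      simp [redF, Encodable.encodek, hcheck, ofNat_encodeFinset]
    · intro a ha
      have hc : a ∈ testCodes w t := by simpa [hS] using ha
      obtain ⟨i, _, rfl⟩ := List.mem_map.1 hc
      exact ⟨_, ht i, rfl⟩
  · rintro ⟨m, F, hF, hsub⟩
    rcases hdx : Encodable.decode (α := Word n) x with _ | w
    · simp [redF, hdx] at hF
    by_cases hex : Encodable.encode w = x
    swap
    · simp [redF, hdx, hex] at hF
    rcases hdm : Encodable.decode (α := Wit n × ℕ) m with _ | ⟨t, k⟩
    · simp [redF, hdx, hdm, hex] at hF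
    cases hchk : memCheck (testCodes w t) (raiseList k)
    · simp [redF, hdx, hdm, hex, hchk] at hF
    have hFk : F = Denumerable.ofNat (Finset ℕ) k := by
      have := hF
      simp [redF, hdx, hdm, hex, hchk] at this
      exact this.symm
    have tests : ∀ i : Fin n, testWord w t i ∈ wordProblem n N := by
      intro i
      have hcode : Encodable.encode (testWord w t i) ∈ testCodes w t :=
        List.mem_map.2 ⟨i, List.mem_finRange i, rfl⟩
      have h1 : Encodable.encode (testWord w t i) ∈ raiseList k :=
        (memCheck_iff _ _).1 hchk _ hcode
      have h2 : Encodable.encode (testWord w t i) ∈ F := by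
        rw [hFk, mem_ofNat_finset]; exact h1
      obtain ⟨l, hl, hel⟩ := hsub h2
      rwa [← Encodable.encode_injective hel]
    exact ⟨w, (main_iff N hsimple w).2 ⟨t, tests⟩, hex⟩
end

section
/- Let n : ℕ and let N = Subgroup.normalClosure T for some finite set T ⊆ FreeGroup (Fin n), where N is normal and the quotient group FreeGroup (Fin n) ⧸ N is a simple group (IsSimpleGroup). Then the word problem W(N) is computable (ComputablePred for membership in W(N), via the encoding of List (Fin n × Bool) into ℕ). In other words, a finitely presented simple group has decidable word problem. -/
namespace WordProblemAux

open FreeGroup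

variable {n : ℕ}

/-- Words over the generators. -/
abbrev Word (n : ℕ) := List (Fin n × Bool)

/-- Certificates: lists of (conjugator word, relator index, sign). -/
abbrev Cert (n : ℕ) := List (Word n × ℕ × Bool)

/-- One step of free reduction, as a fold step. -/
def redStep (x : Fin n × Bool) (r : Word n) : Word n :=
  List.casesOn r [x] fun y ys => if x = (y.1, !y.2) then ys else x :: y :: ys

/-- Free reduction as a fold. -/
def wred (l : Word n) : Word n := l.foldr redStep []

lemma wred_eq_reduce (l : Word n) : wred l = FreeGroup.reduce l := by
  induction l with
  | nil => rfl
  | cons x xs ih =>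
    rw [FreeGroup.reduce.cons]
    show redStep x (wred xs) = _
    rw [ih]
    cases FreeGroup.reduce xs with
    | nil => rfl
    | cons y ys => simp only [redStep, Prod.ext_iff]

lemma mk_eq_one_iff (u : Word n) : FreeGroup.mk u = 1 ↔ wred u = [] := by
  rw [wred_eq_reduce, ← FreeGroup.toWord_mk, FreeGroup.toWord_eq_nil_iff]

lemma mk_eq_prod (l : Word n) :
    FreeGroup.mk l = (l.map fun p => cond p.2 (FreeGroup.of p.1) (FreeGroup.of p.1)⁻¹).prod := by
  induction l with
  | nil => simp [← FreeGroup.one_eq_mk]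
  | cons p l ih =>
    have h1 : FreeGroup.mk (p :: l) = FreeGroup.mk [p] * FreeGroup.mk l := by
      rw [FreeGroup.mul_mk]; rfl
    rw [h1, ih, List.map_cons, List.prod_cons]
    congr 1
    obtain ⟨a, b⟩ := p
    cases b
    · show FreeGroup.mk [(a, false)] = (FreeGroup.of a)⁻¹
      rw [show FreeGroup.of a = FreeGroup.mk [(a, true)] from rfl, FreeGroup.inv_mk]
      rfl
    · rfl

lemma mk_flatten (L : List (Word n)) :
    FreeGroup.mk L.flatten = (L.map FreeGroup.mk).prod := by
  induction L with
  | nil => simp [← FreeGroup.one_eq_mk]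
  | cons x xs ih => rw [List.flatten_cons, ← FreeGroup.mul_mk, ih, List.map_cons, List.prod_cons]

/-- The word of one certificate entry. -/
def entryWord (B : List (Word n)) (e : Word n × ℕ × Bool) : Word n :=
  e.1 ++ (cond e.2.2 (B.getD e.2.1 []) (invRev (B.getD e.2.1 []))) ++ invRev e.1

/-- The word certified by a certificate. -/
def certWord (B : List (Word n)) (c : Cert n) : Word n :=
  (c.map (entryWord B)).flatten

/-- Check that a certificate witnesses membership of `w` in the normal closure of
the elements of `B`. -/
def check (B : List (Word n)) (w : Word n) (c : Cert n) : Bool :=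
  decide (wred (certWord B c ++ invRev w) = [])

lemma mk_invRev (u : Word n) : FreeGroup.mk (invRev u) = (FreeGroup.mk u)⁻¹ :=
  (FreeGroup.inv_mk).symm

lemma mk_entryWord_mem (B : List (Word n)) (e : Word n × ℕ × Bool)
    {S : Set (FreeGroup (Fin n))} (hS : S = {x | ∃ b ∈ B, FreeGroup.mk b = x}) :
    FreeGroup.mk (entryWord B e) ∈ Subgroup.normalClosure S := by
  have hnorm : (Subgroup.normalClosure S).Normal := Subgroup.normalClosure_normal
  have hmid : FreeGroup.mk (B.getD e.2.1 []) ∈ Subgroup.normalClosure S := by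
    by_cases h : e.2.1 < B.length
    · rw [List.getD_eq_getElem _ _ h]
      exact Subgroup.subset_normalClosure (by rw [hS]; exact ⟨_, List.getElem_mem h, rfl⟩)
    · rw [List.getD_eq_default _ _ (le_of_not_gt h)]
      rw [← FreeGroup.one_eq_mk]
      exact one_mem _
  have hmid2 : FreeGroup.mk (cond e.2.2 (B.getD e.2.1 []) (invRev (B.getD e.2.1 []))) ∈
      Subgroup.normalClosure S := by
    cases e.2.2
    · show FreeGroup.mk (invRev _) ∈ _
      rw [mk_invRev]; exact inv_mem hmid
    · exact hmid
  show FreeGroup.mk (e.1 ++ _ ++ invRev e.1) ∈ _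
  rw [← FreeGroup.mul_mk, ← FreeGroup.mul_mk, mk_invRev]
  exact hnorm.conj_mem _ hmid2 _

lemma mk_certWord_mem (B : List (Word n)) (c : Cert n)
    {S : Set (FreeGroup (Fin n))} (hS : S = {x | ∃ b ∈ B, FreeGroup.mk b = x}) :
    FreeGroup.mk (certWord B c) ∈ Subgroup.normalClosure S := by
  rw [certWord, mk_flatten]
  refine list_prod_mem fun x hx => ?_
  simp only [List.map_map, List.mem_map, Function.comp] at hx
  obtain ⟨e, -, rfl⟩ := hx
  exact mk_entryWord_mem B e hS


lemma exists_entry (B : List (Word n)) {S : Set (FreeGroup (Fin n))}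
    (hS : S = {x | ∃ b ∈ B, FreeGroup.mk b = x}) (y : FreeGroup (Fin n))
    (hy : y ∈ Group.conjugatesOfSet S ∪ (Group.conjugatesOfSet S)⁻¹) :
    ∃ e : Word n × ℕ × Bool, FreeGroup.mk (entryWord B e) = y := by
  classical
  rcases hy with hy | hy
  · obtain ⟨a, haS, hconj⟩ := Group.mem_conjugatesOfSet_iff.1 hy
    obtain ⟨g, hg⟩ := isConj_iff.1 hconj
    rw [hS] at haS
    obtain ⟨b, hbB, hmk⟩ := haS
    obtain ⟨i, hi, hbi⟩ := List.getElem_of_mem hbB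
    refine ⟨(g.toWord, i, true), ?_⟩
    show FreeGroup.mk (g.toWord ++ B.getD i [] ++ invRev g.toWord) = y
    rw [← FreeGroup.mul_mk, ← FreeGroup.mul_mk, mk_invRev, FreeGroup.mk_toWord,
      List.getD_eq_getElem _ _ hi, hbi, hmk, hg]
  · rw [Set.mem_inv] at hy
    obtain ⟨a, haS, hconj⟩ := Group.mem_conjugatesOfSet_iff.1 hy
    obtain ⟨g, hg⟩ := isConj_iff.1 hconj
    rw [hS] at haS
    obtain ⟨b, hbB, hmk⟩ := haS
    obtain ⟨i, hi, hbi⟩ := List.getElem_of_mem hbB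
    refine ⟨(g.toWord, i, false), ?_⟩
    show FreeGroup.mk (g.toWord ++ invRev (B.getD i []) ++ invRev g.toWord) = y
    rw [← FreeGroup.mul_mk, ← FreeGroup.mul_mk, mk_invRev, mk_invRev, FreeGroup.mk_toWord,
      List.getD_eq_getElem _ _ hi, hbi, hmk]
    have : (g * a * g⁻¹)⁻¹ = y := by rw [hg]; simp
    rw [← this]
    group

lemma exists_cert_of_prod (B : List (Word n)) {S : Set (FreeGroup (Fin n))}
    (hS : S = {x | ∃ b ∈ B, FreeGroup.mk b = x}) :
    ∀ l : List (FreeGroup (Fin n)),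
      (∀ y ∈ l, y ∈ Group.conjugatesOfSet S ∪ (Group.conjugatesOfSet S)⁻¹) →
      ∃ c : Cert n, FreeGroup.mk (certWord B c) = l.prod := by
  intro l
  induction l with
  | nil => exact fun _ => ⟨[], by simp [certWord, ← FreeGroup.one_eq_mk]⟩
  | cons y l ih =>
    intro h
    obtain ⟨c, hc⟩ := ih fun z hz => h z (List.mem_cons_of_mem _ hz)
    obtain ⟨e, he⟩ := exists_entry B hS y (h y (List.mem_cons_self))
    refine ⟨e :: c, ?_⟩
    rw [certWord, List.map_cons, List.flatten_cons, ← FreeGroup.mul_mk, List.prod_cons, he]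
    rw [certWord] at hc
    rw [hc]

lemma mem_normalClosure_iff_cert (B : List (Word n)) {S : Set (FreeGroup (Fin n))}
    (hS : S = {x | ∃ b ∈ B, FreeGroup.mk b = x}) (w : Word n) :
    FreeGroup.mk w ∈ Subgroup.normalClosure S ↔ ∃ c : Cert n, check B w c = true := by
  constructor
  · intro hmem
    have h1 : FreeGroup.mk w ∈ (Subgroup.closure (Group.conjugatesOfSet S)).toSubmonoid := hmem
    rw [Subgroup.closure_toSubmonoid] at h1
    obtain ⟨l, hl, hprod⟩ := Submonoid.exists_list_of_mem_closure h1
    obtain ⟨c, hc⟩ := exists_cert_of_prod B hS l hl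
    refine ⟨c, ?_⟩
    rw [check, decide_eq_true_eq, ← mk_eq_one_iff, ← FreeGroup.mul_mk, mk_invRev, hc, hprod]
    exact mul_inv_cancel _
  · rintro ⟨c, hc⟩
    rw [check, decide_eq_true_eq, ← mk_eq_one_iff, ← FreeGroup.mul_mk, mk_invRev] at hc
    have : FreeGroup.mk (certWord B c) = FreeGroup.mk w := by
      have := mul_inv_eq_one.1 hc
      exact this
    rw [← this]
    exact mk_certWord_mem B c hS


lemma not_mem_iff_forall_gen (T : Set (FreeGroup (Fin n)))
    (hsimple : IsSimpleGroup (FreeGroup (Fin n) ⧸ Subgroup.normalClosure T))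
    (x : FreeGroup (Fin n)) :
    x ∉ Subgroup.normalClosure T ↔
      ∀ i : Fin n, FreeGroup.of i ∈ Subgroup.normalClosure (T ∪ {x}) := by
  set N := Subgroup.normalClosure T with hN
  have hnorm : N.Normal := Subgroup.normalClosure_normal
  set N' := Subgroup.normalClosure (T ∪ {x}) with hN'
  have hnorm' : N'.Normal := Subgroup.normalClosure_normal
  have hNN' : N ≤ N' := Subgroup.normalClosure_mono Set.subset_union_left
  constructor
  · intro hx i
    -- show N' = ⊤
    set φ := QuotientGroup.mk' N
    have hmapnorm : (Subgroup.map φ N').Normal :=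
      hnorm'.map φ (QuotientGroup.mk'_surjective N)
    have hx' : φ x ∈ Subgroup.map φ N' :=
      Subgroup.mem_map_of_mem φ (Subgroup.subset_normalClosure (Set.mem_union_right _ rfl))
    have hxne : φ x ≠ 1 := by
      intro h
      exact hx ((QuotientGroup.eq_one_iff x).1 h)
    rcases hsimple.eq_bot_or_eq_top_of_normal _ hmapnorm with hbot | htop
    · rw [hbot] at hx'
      exact absurd (Subgroup.mem_bot.1 hx') hxne
    · have : N' = ⊤ := by
        have h1 : Subgroup.comap φ (Subgroup.map φ N') = N' ⊔ φ.ker :=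
          Subgroup.comap_map_eq φ N'
        rw [htop, Subgroup.comap_top, QuotientGroup.ker_mk'] at h1
        rw [h1, sup_eq_left.2 hNN']
      rw [this]
      trivial
  · intro h hx
    have hle : N' ≤ N := Subgroup.normalClosure_le_normal
      (Set.union_subset Subgroup.subset_normalClosure (Set.singleton_subset_iff.2 hx))
    have htop : N = ⊤ := by
      have h1 : Subgroup.closure (Set.range (FreeGroup.of : Fin n → _)) ≤ N :=
        (Subgroup.closure_le _).2 (by rintro _ ⟨i, rfl⟩; exact hle (h i))
      rw [FreeGroup.closure_range_of] at h1
      exact top_le_iff.1 h1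
    have : Subsingleton (FreeGroup (Fin n) ⧸ N) := by
      rw [htop]; exact QuotientGroup.subsingleton_quotient_top
    exact false_of_nontrivial_of_subsingleton (FreeGroup (Fin n) ⧸ N)


lemma primrec_redStep : Primrec₂ (redStep (n := n)) := by
  have h : Primrec fun a : (Fin n × Bool) × Word n =>
      (List.casesOn a.2 [a.1] fun y ys =>
        if a.1 = (y.1, !y.2) then ys else a.1 :: y :: ys : Word n) := by
    apply Primrec.list_casesOn (f := fun a : (Fin n × Bool) × Word n => a.2)
      (g := fun a => [a.1])
      (h := fun a p => if a.1 = (p.1.1, !p.1.2) then p.2 else a.1 :: p.1 :: p.2)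
      Primrec.snd (Primrec.list_cons.comp Primrec.fst (Primrec.const []))
    apply Primrec.ite
    · exact PrimrecRel.comp Primrec.eq (Primrec.fst.comp Primrec.fst)
        (Primrec.pair (Primrec.fst.comp (Primrec.fst.comp Primrec.snd))
          ((Primrec.dom_bool Bool.not).comp (Primrec.snd.comp (Primrec.fst.comp Primrec.snd))))
    · exact Primrec.snd.comp Primrec.snd
    · exact Primrec.list_cons.comp (Primrec.fst.comp Primrec.fst)
        (Primrec.list_cons.comp (Primrec.fst.comp Primrec.snd) (Primrec.snd.comp Primrec.snd))
  exact h.of_eq fun p => by rcases p with ⟨x, r⟩; cases r <;> rfl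

lemma primrec_wred : Primrec (wred (n := n)) := by
  have h := Primrec.list_foldr (f := fun l : Word n => l) (g := fun _ => ([] : Word n))
    (h := fun _ p => redStep p.1 p.2) Primrec.id (Primrec.const [])
    ((primrec_redStep.comp (Primrec.fst.comp Primrec.snd)
      (Primrec.snd.comp Primrec.snd)).to₂)
  exact h.of_eq fun l => rfl

lemma primrec_invRev : Primrec (invRev (α := Fin n)) := by
  have h2 : Primrec fun l : Word n =>
      (l.map fun g : Fin n × Bool => (g.1, !g.2)).reverse :=
    Primrec.list_reverse.comp (Primrec.list_map Primrec.id
      ((Primrec.pair (Primrec.fst.comp Primrec.snd)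
        ((Primrec.dom_bool Bool.not).comp (Primrec.snd.comp Primrec.snd))).to₂))
  exact h2.of_eq fun l => rfl

lemma primrec_check :
    Primrec fun q : (List (Word n) × Word n) × Cert n => check q.1.1 q.1.2 q.2 := by
  have hentry : Primrec₂ fun (q : (List (Word n) × Word n) × Cert n)
      (e : Word n × ℕ × Bool) => entryWord q.1.1 e := by
    have he1 : Primrec fun p : ((List (Word n) × Word n) × Cert n) × (Word n × ℕ × Bool) =>
        p.2.1 := Primrec.fst.comp Primrec.snd
    have hgetD : Primrec fun p : ((List (Word n) × Word n) × Cert n) × (Word n × ℕ × Bool) =>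
        p.1.1.1.getD p.2.2.1 [] :=
      (Primrec.list_getD ([] : Word n)).comp (Primrec.fst.comp (Primrec.fst.comp Primrec.fst))
        (Primrec.fst.comp (Primrec.snd.comp Primrec.snd))
    have hmid : Primrec fun p : ((List (Word n) × Word n) × Cert n) × (Word n × ℕ × Bool) =>
        cond p.2.2.2 (p.1.1.1.getD p.2.2.1 []) (invRev (p.1.1.1.getD p.2.2.1 [])) :=
      Primrec.cond (Primrec.snd.comp (Primrec.snd.comp Primrec.snd)) hgetD
        (primrec_invRev.comp hgetD)
    exact (Primrec.list_append.comp (Primrec.list_append.comp he1 hmid)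
      (primrec_invRev.comp he1)).to₂
  have hcw : Primrec fun q : (List (Word n) × Word n) × Cert n => certWord q.1.1 q.2 :=
    Primrec.list_flatten.comp (Primrec.list_map Primrec.snd hentry)
  have hword : Primrec fun q : (List (Word n) × Word n) × Cert n =>
      wred (certWord q.1.1 q.2 ++ invRev q.1.2) :=
    primrec_wred.comp (Primrec.list_append.comp hcw
      (primrec_invRev.comp (Primrec.snd.comp Primrec.fst)))
  exact (PrimrecRel.comp Primrec.eq hword (Primrec.const [])).decide

lemma foldr_all {β : Type*} (q : β → Bool) :
    ∀ L : List β, L.foldr (fun b s => q b && s) true = L.all q := by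
  intro L
  induction L with
  | nil => rfl
  | cons b L ih => rw [List.foldr_cons, ih, List.all_cons]

lemma primrec_list_all {α β : Type*} [Primcodable α] [Primcodable β] (L : List β)
    {p : α → β → Bool} (hp : Primrec₂ p) : Primrec fun a => L.all (p a) := by
  have h := Primrec.list_foldr (f := fun _ : α => L) (g := fun _ => true)
    (h := fun a q => p a q.1 && q.2) (Primrec.const L) (Primrec.const true)
    (((Primrec.dom_bool₂ (· && ·)).comp (hp.comp Primrec.fst
      (Primrec.fst.comp Primrec.snd)) (Primrec.snd.comp Primrec.snd)).to₂)
  exact h.of_eq fun a => foldr_all (p a) L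

lemma rePred_exists {α β : Type*} [Primcodable α] [Primcodable β] {f : α → β → Bool}
    (hf : Computable₂ f) : REPred fun a => ∃ b, f a b = true := by
  have hg : Computable₂ fun (a : α) (k : ℕ) =>
      ((Encodable.decode (α := β) k).map (f a)).getD false :=
    Computable.option_getD
      (Computable.option_map (Computable.decode.comp Computable.snd)
        ((hf.comp (Computable.fst.comp Computable.fst) Computable.snd).to₂))
      (Computable.const false)
  have h1 : Partrec fun a => Nat.rfind fun k =>
      (Part.some (((Encodable.decode (α := β) k).map (f a)).getD false) : Part Bool) :=
    Partrec.rfind hg.partrec₂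
  refine (h1.map ((Computable.const ()).comp Computable.fst).to₂).of_eq fun a => ?_
  refine Part.ext' ?_ (fun h₁ h₂ => rfl)
  constructor
  · intro h
    have h' : (Nat.rfind _).Dom := h
    replace h' := Nat.rfind_dom.1 h'
    obtain ⟨k, hk, -⟩ := h'
    rw [Part.mem_some_iff] at hk
    refine ⟨?_, trivial⟩
    cases hd : Encodable.decode (α := β) k with
    | none => rw [hd] at hk; exact absurd hk.symm (by simp)
    | some b =>
      rw [hd] at hk
      exact ⟨b, hk.symm⟩
  · intro h
    obtain ⟨⟨b, hb⟩, -⟩ := h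
    show (Nat.rfind _).Dom
    refine Nat.rfind_dom.2 ?_
    refine ⟨Encodable.encode b, ?_, fun {m} _ => trivial⟩
    rw [Part.mem_some_iff, Encodable.encodek]
    exact hb.symm

end WordProblemAux

/-- A finitely presented simple group has decidable word problem. -/
theorem wordProblem_computable_of_fp_simple (n : ℕ)
    (T : Set (FreeGroup (Fin n))) (hT : T.Finite)
    (hsimple : IsSimpleGroup (FreeGroup (Fin n) ⧸ Subgroup.normalClosure T)) :
    ComputablePred (· ∈ wordProblem n (Subgroup.normalClosure T)) := by
  classical
  open WordProblemAux in
  set N := Subgroup.normalClosure T with hN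
  obtain ⟨tl, htl⟩ : ∃ tl : List (FreeGroup (Fin n)), ∀ x, x ∈ tl ↔ x ∈ T :=
    ⟨hT.toFinset.toList, fun x => by simp⟩
  set B : List (Word n) := tl.map FreeGroup.toWord with hBdef
  have hB : T = {x | ∃ b ∈ B, FreeGroup.mk b = x} := by
    ext x
    simp only [Set.mem_setOf_eq, hBdef, List.mem_map]
    constructor
    · intro hx
      exact ⟨x.toWord, ⟨x, (htl x).2 hx, rfl⟩, FreeGroup.mk_toWord⟩
    · rintro ⟨b, ⟨t, ht, rfl⟩, rfl⟩
      rw [FreeGroup.mk_toWord]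
      exact (htl t).1 ht
  have hB' : ∀ l : Word n,
      T ∪ {FreeGroup.mk l} = {x | ∃ b ∈ B ++ [l], FreeGroup.mk b = x} := by
    intro l; ext x
    simp only [Set.mem_setOf_eq, List.mem_append, List.mem_singleton, Set.mem_union,
      Set.mem_singleton_iff]
    constructor
    · rintro (hx | rfl)
      · rw [hB] at hx; obtain ⟨b, hb, rfl⟩ := hx; exact ⟨b, Or.inl hb, rfl⟩
      · exact ⟨l, Or.inr rfl, rfl⟩
    · rintro ⟨b, hb | rfl, rfl⟩
      · left; rw [hB]; exact ⟨b, hb, rfl⟩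
      · right; rfl
  have hmem : ∀ w : Word n, w ∈ wordProblem n N ↔ FreeGroup.mk w ∈ N := by
    intro w
    rw [wordProblem, Set.mem_setOf_eq, ← mk_eq_prod]
  -- r.e. of the word problem
  have hcomp1 : Computable₂ fun (w : Word n) (c : Cert n) => check B w c :=
    (primrec_check.comp (Primrec.pair (Primrec.pair (Primrec.const B) Primrec.fst)
      Primrec.snd)).to_comp
  have hre1 : REPred (· ∈ wordProblem n N) := by
    refine (rePred_exists hcomp1).of_eq fun w => ?_
    rw [hmem w, hN]
    exact (mem_normalClosure_iff_cert B hB w).symm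
  -- r.e. of the complement
  have hp2 : Primrec₂ fun (a : Word n × List (Cert n)) (i : Fin n) =>
      check (B ++ [a.1]) [(i, true)] (a.2.getD i.val []) := by
    have hBpart : Primrec fun x : (Word n × List (Cert n)) × Fin n => B ++ [x.1.1] :=
      Primrec.list_append.comp (Primrec.const B)
        (Primrec.list_cons.comp (Primrec.fst.comp Primrec.fst) (Primrec.const []))
    have hwpart : Primrec fun x : (Word n × List (Cert n)) × Fin n =>
        ([(x.2, true)] : Word n) :=
      Primrec.list_cons.comp (Primrec.pair Primrec.snd (Primrec.const true))
        (Primrec.const [])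
    have hcert : Primrec fun x : (Word n × List (Cert n)) × Fin n =>
        x.1.2.getD x.2.val [] :=
      (Primrec.list_getD ([] : Cert n)).comp (Primrec.snd.comp Primrec.fst)
        (Primrec.fin_val.comp Primrec.snd)
    exact (primrec_check.comp (Primrec.pair (Primrec.pair hBpart hwpart) hcert)).to₂
  have hcomp2 : Computable₂ fun (w : Word n) (cs : List (Cert n)) =>
      (List.finRange n).all fun i => check (B ++ [w]) [(i, true)] (cs.getD i.val []) :=
    (primrec_list_all (List.finRange n) hp2).to_comp
  have hre2 : REPred (fun w => ¬(w ∈ wordProblem n N)) := by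
    refine (rePred_exists hcomp2).of_eq fun w => ?_
    rw [hmem w, hN]
    have key := (not_mem_iff_forall_gen T hsimple (FreeGroup.mk w)).symm
    rw [← key]
    constructor
    · rintro ⟨cs, hcs⟩
      rw [List.all_eq_true] at hcs
      intro i
      have hi := hcs i (List.mem_finRange i)
      have := (mem_normalClosure_iff_cert (B ++ [w]) (hB' w) [(i, true)]).2
        ⟨cs.getD i.val [], hi⟩
      exact this
    · intro h
      have h' : ∀ i : Fin n, ∃ c : Cert n, check (B ++ [w]) [(i, true)] c = true :=
        fun i => (mem_normalClosure_iff_cert (B ++ [w]) (hB' w) [(i, true)]).1 (h i)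
      choose g hg using h'
      refine ⟨(List.finRange n).map g, ?_⟩
      rw [List.all_eq_true]
      intro i _
      have hlen : (i : ℕ) < ((List.finRange n).map g).length := by
        simp [i.isLt]
      rw [List.getD_eq_getElem _ _ hlen]
      simp only [List.getElem_map, List.getElem_finRange, Fin.cast_mk, Fin.eta]
      exact hg i
  exact ComputablePred.computable_iff_re_compl_re'.2 ⟨hre1, hre2⟩
end

section
/- Let Y be a minimal subshift over Fin k. Then the language L(Y) is enumeration reducible to its complement: L(Y) ≤ₑ L(Y)ᶜ (the set of words that appear in Y is enumeration reducible to the set of words that do not appear in Y). -/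
/-- The shift map on `ℤ → Fin k`. -/
def shiftMap (k : ℕ) (x : ℤ → Fin k) : ℤ → Fin k := fun i => x (i + 1)

/-- `Y` is a subshift: closed and shift-invariant. -/
def IsSubshift (k : ℕ) (Y : Set (ℤ → Fin k)) : Prop :=
  IsClosed Y ∧ shiftMap k '' Y = Y

/-- The word `w` appears in the configuration `x`. -/
def AppearsInPoint (k : ℕ) (w : List (Fin k)) (x : ℤ → Fin k) : Prop :=
  ∃ i : ℤ, ∀ j : ℕ, ∀ hj : j < w.length, x (i + (j : ℤ)) = w.get ⟨j, hj⟩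

/-- The language of `Y`: the set of words appearing in some point of `Y`. -/
def Lang (k : ℕ) (Y : Set (ℤ → Fin k)) : Set (List (Fin k)) :=
  {w : List (Fin k) | ∃ x ∈ Y, AppearsInPoint k w x}

/-- `Y` is a minimal subshift. -/
def IsMinimalSubshift (k : ℕ) (Y : Set (ℤ → Fin k)) : Prop :=
  IsSubshift k Y ∧ Y.Nonempty ∧
    ∀ Z ⊆ Y, IsClosed Z → Z.Nonempty → shiftMap k '' Z = Z → Z = Y


namespace LangEnumAux

open Encodable Denumerable


variable {k : ℕ}

/-- Bool test: `w` occurs as a contiguous block in `u`. -/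
def containsB (w u : List (Fin k)) : Bool :=
  (List.range (u.length + 1)).any fun q =>
    decide (q + w.length ≤ u.length) &&
      (List.range w.length).all fun j => decide (u[q + j]? = w[j]?)

/-- All lists of length `m` over `Fin k`. -/
def allLists (k m : ℕ) : List (List (Fin k)) :=
  Nat.rec [([] : List (Fin k))]
    (fun _ L => L.flatMap fun l => (List.finRange k).map (· :: l)) m

def sumTo (l : List ℕ) (i : ℕ) : ℕ :=
  ((List.range (i + 1)).map fun j => l.getD j 0).sum

def raiseL (l : List ℕ) : List ℕ :=
  (List.range l.length).map fun i => i + sumTo l i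

def memF (a c : ℕ) : Bool := (raiseL (ofNat (List ℕ) c)).any fun b => decide (b = a)

def goodB (w : List (Fin k)) (m c : ℕ) : Bool :=
  (allLists k m).all fun u => containsB w u || memF (encode u) c

def langF (k : ℕ) : ℕ × ℕ → Option (Finset ℕ) := fun p =>
  (decode₂ (List (Fin k)) p.1).bind fun w =>
    if goodB w p.2.unpair.1 p.2.unpair.2 = true then
      some (ofNat (Finset ℕ) p.2.unpair.2)
    else none

lemma containsB_iff (w u : List (Fin k)) :
    containsB w u = true ↔
      ∃ q, q + w.length ≤ u.length ∧ ∀ j < w.length, u[q + j]? = w[j]? := by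
  simp only [containsB, List.any_eq_true, List.mem_range, List.all_eq_true,
    Bool.and_eq_true, decide_eq_true_eq]
  constructor
  · rintro ⟨q, -, hq, h⟩; exact ⟨q, hq, h⟩
  · rintro ⟨q, hq, h⟩; exact ⟨q, by omega, hq, h⟩

lemma mem_allLists {m : ℕ} {u : List (Fin k)} :
    u ∈ allLists k m ↔ u.length = m := by
  induction m generalizing u with
  | zero => simp [allLists, List.length_eq_zero_iff]
  | succ m ih =>
    show u ∈ (allLists k m).flatMap _ ↔ _
    simp only [List.mem_flatMap, List.mem_map, List.mem_finRange]
    constructor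
    · rintro ⟨l, hl, a, -, rfl⟩; simp [ih.1 hl]
    · intro hu
      cases u with
      | nil => simp at hu
      | cons a l => exact ⟨l, ih.2 (by simpa using hu), a, trivial, rfl⟩

lemma sumTo_cons_zero (m : ℕ) (l : List ℕ) : sumTo (m :: l) 0 = m := by
  show (List.map _ [0]).sum = m; simp

lemma sumTo_cons_succ (m : ℕ) (l : List ℕ) (j : ℕ) :
    sumTo (m :: l) (j + 1) = m + sumTo l j := by
  simp only [sumTo, List.range_succ_eq_map, List.map_cons, List.sum_cons, List.map_map]
  congr 1

lemma raise'_eq (l : List ℕ) : ∀ n,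
    Denumerable.raise' l n = (List.range l.length).map fun i => n + i + sumTo l i := by
  induction l with
  | nil => intro n; simp [Denumerable.raise']
  | cons m l ih =>
    intro n
    show (m + n) :: Denumerable.raise' l (m + n + 1) = _
    rw [ih]
    simp only [List.length_cons, List.range_succ_eq_map, List.map_cons, List.map_map]
    congr 1
    · rw [sumTo_cons_zero]; omega
    · apply List.map_congr_left
      intro i _
      simp only [Function.comp_apply, sumTo_cons_succ]
      omega

lemma memF_iff (a c : ℕ) : memF a c = true ↔ a ∈ ofNat (Finset ℕ) c := by
  have h1 : ofNat (Finset ℕ) c =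
      Finset.map (Denumerable.eqv ℕ).symm.toEmbedding
        (Denumerable.raise'Finset (ofNat (List ℕ) c) 0) := rfl
  have h2 : ∀ b : ℕ, (Denumerable.eqv ℕ).symm b = b := fun b => by
    simp [Denumerable.eqv]
  simp only [memF, List.any_eq_true, decide_eq_true_eq, h1, Finset.mem_map,
    Equiv.coe_toEmbedding, h2]
  have h3 : ∀ b : ℕ, b ∈ Denumerable.raise'Finset (ofNat (List ℕ) c) 0 ↔
      b ∈ raiseL (ofNat (List ℕ) c) := by
    intro b
    show b ∈ Denumerable.raise' _ 0 ↔ _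
    rw [raise'_eq]
    simp [raiseL]
  constructor
  · rintro ⟨b, hb, rfl⟩; exact ⟨b, (h3 b).2 hb, rfl⟩
  · rintro ⟨b, hb, rfl⟩; exact ⟨b, (h3 b).1 hb, rfl⟩

lemma goodB_iff (w : List (Fin k)) (m c : ℕ) :
    goodB w m c = true ↔
      ∀ u : List (Fin k), u.length = m → containsB w u = false →
        encode u ∈ ofNat (Finset ℕ) c := by
  simp only [goodB, List.all_eq_true, Bool.or_eq_true, memF_iff]
  constructor
  · intro h u hu hc
    rcases h u (mem_allLists.2 hu) with h' | h'
    · rw [hc] at h'; cases h'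
    · exact h'
  · intro h u hu
    by_cases hc : containsB w u = true
    · exact Or.inl hc
    · exact Or.inr (h u (mem_allLists.1 hu) (Bool.not_eq_true _ ▸ hc))


open Primrec in
lemma list_all_prim {α β : Type*} [Primcodable α] [Primcodable β] {f : α → List β}
    {p : α → β → Bool} (hf : Primrec f) (hp : Primrec₂ p) :
    Primrec fun a => (f a).all (p a) := by
  have : Primrec fun a => (f a).foldr (fun b r => p a b && r) true :=
    list_foldr hf (const true)
      (((Primrec.dom_bool₂ (· && ·)).comp (hp.comp fst (fst.comp snd)) (snd.comp snd)).to₂).to₂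
  refine this.of_eq fun a => ?_
  induction f a with
  | nil => rfl
  | cons b l ih => simp [List.all_cons, ← ih]

open Primrec in
lemma list_any_prim {α β : Type*} [Primcodable α] [Primcodable β] {f : α → List β}
    {p : α → β → Bool} (hf : Primrec f) (hp : Primrec₂ p) :
    Primrec fun a => (f a).any (p a) := by
  have : Primrec fun a => (f a).foldr (fun b r => p a b || r) false :=
    list_foldr hf (const false)
      (((Primrec.dom_bool₂ (· || ·)).comp (hp.comp fst (fst.comp snd)) (snd.comp snd)).to₂).to₂
  refine this.of_eq fun a => ?_
  induction f a with
  | nil => rfl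
  | cons b l ih => simp [List.any_cons, ← ih]

open Primrec in
lemma primrec_containsB : Primrec₂ (containsB (k := k)) := by
  have c1 : Primrec fun x : (List (Fin k) × List (Fin k)) × ℕ =>
      decide (x.2 + x.1.1.length ≤ x.1.2.length) :=
    PrimrecPred.decide (Primrec.nat_le.comp (nat_add.comp snd (list_length.comp (fst.comp fst)))
      (list_length.comp (snd.comp fst)))
  have c2 : Primrec fun x : (List (Fin k) × List (Fin k)) × ℕ =>
      (List.range x.1.1.length).all fun j => decide (x.1.2[x.2 + j]? = x.1.1[j]?) :=
    list_all_prim (list_range.comp (list_length.comp (fst.comp fst)))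
      (PrimrecPred.decide (Primrec.eq.comp
        (list_getElem?.comp (snd.comp (fst.comp fst)) (nat_add.comp (snd.comp fst) snd))
        (list_getElem?.comp (fst.comp (fst.comp fst)) snd)))
  exact list_any_prim (list_range.comp (succ.comp (list_length.comp snd)))
    ((Primrec.dom_bool₂ (· && ·)).comp c1 c2)

open Primrec in
lemma primrec_allLists : Primrec (allLists k) := by
  have hg : Primrec₂ fun (x : ℕ × List (List (Fin k))) (l : List (Fin k)) =>
      (List.finRange k).map (· :: l) :=
    list_map (const (List.finRange k)) (list_cons.comp snd (snd.comp fst))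
  exact nat_rec₁ [([] : List (Fin k))] (list_flatMap snd hg)

open Primrec in
lemma primrec_sumTo : Primrec₂ sumTo := by
  have hmap : Primrec fun x : List ℕ × ℕ =>
      (List.range (x.2 + 1)).map fun j => x.1.getD j 0 :=
    list_map (list_range.comp (succ.comp snd)) ((list_getD 0).comp (fst.comp fst) snd)
  have : Primrec fun x : List ℕ × ℕ =>
      ((List.range (x.2 + 1)).map fun j => x.1.getD j 0).foldr (· + ·) 0 :=
    list_foldr hmap (const 0) ((nat_add.comp (fst.comp snd) (snd.comp snd)).to₂).to₂
  refine this.of_eq fun x => ?_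
  simp [sumTo, List.sum_eq_foldr]

open Primrec in
lemma primrec_raiseL : Primrec raiseL :=
  list_map (list_range.comp list_length) (nat_add.comp snd (primrec_sumTo.comp fst snd))

open Primrec in
lemma primrec_memF : Primrec₂ memF :=
  list_any_prim (primrec_raiseL.comp ((Primrec.ofNat (List ℕ)).comp snd))
    (PrimrecPred.decide (Primrec.eq.comp snd (fst.comp fst)))

open Primrec in
lemma primrec_goodB : Primrec fun x : List (Fin k) × ℕ × ℕ => goodB x.1 x.2.1 x.2.2 :=
  list_all_prim (primrec_allLists.comp (fst.comp snd))
    ((Primrec.dom_bool₂ (· || ·)).comp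
      (primrec_containsB.comp (fst.comp fst) snd)
      (primrec_memF.comp (Primrec.encode.comp snd) (snd.comp (snd.comp fst))))

open Primrec in
lemma computable_langF : Computable (langF k) := by
  have hun : Primrec fun x : (ℕ × ℕ) × List (Fin k) => (Nat.unpair x.1.2) :=
    Primrec.unpair.comp (snd.comp fst)
  have hb : Primrec fun x : (ℕ × ℕ) × List (Fin k) =>
      goodB x.2 (Nat.unpair x.1.2).1 (Nat.unpair x.1.2).2 :=
    primrec_goodB.comp (snd.pair ((fst.comp hun).pair (snd.comp hun)))
  have hc : PrimrecPred fun x : (ℕ × ℕ) × List (Fin k) =>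
      goodB x.2 (Nat.unpair x.1.2).1 (Nat.unpair x.1.2).2 = true :=
    Primrec.primrecPred (hb.of_eq fun a => by simp)
  have hg : Primrec₂ fun (p : ℕ × ℕ) (w : List (Fin k)) =>
      if goodB w p.2.unpair.1 p.2.unpair.2 = true then
        some (Denumerable.ofNat (Finset ℕ) p.2.unpair.2) else none :=
    Primrec.ite hc
      (option_some.comp ((Primrec.ofNat (Finset ℕ)).comp (snd.comp hun)))
      (const none)
  exact (option_bind (Primrec.decode₂.comp fst) hg).to_comp

section Dynamics

variable {Y : Set (ℤ → Fin k)}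

/-- `w` appears in `y` at position `i`. -/
def AppearsAt (w : List (Fin k)) (y : ℤ → Fin k) (i : ℤ) : Prop :=
  ∀ j : ℕ, ∀ hj : j < w.length, y (i + (j : ℤ)) = w.get ⟨j, hj⟩

lemma isOpen_appearsAt (w : List (Fin k)) (i : ℤ) :
    IsOpen {y : ℤ → Fin k | AppearsAt w y i} := by
  have : {y : ℤ → Fin k | AppearsAt w y i} =
      ⋂ j : Fin w.length, {y : ℤ → Fin k | y (i + (j : ℕ)) = w.get j} := by
    ext y
    simp only [Set.mem_setOf_eq, Set.mem_iInter, AppearsAt]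
    exact ⟨fun h j => h j j.2, fun h j hj => h ⟨j, hj⟩⟩
  rw [this]
  refine isOpen_iInter_of_finite fun j => ?_
  have he : {y : ℤ → Fin k | y (i + (j : ℕ)) = w.get j} =
      (fun y : ℤ → Fin k => y (i + (j : ℕ))) ⁻¹' ({w.get j} : Set (Fin k)) := rfl
  rw [he]
  exact (continuous_apply _).isOpen_preimage _ (isOpen_discrete _)

lemma isOpen_appears (w : List (Fin k)) :
    IsOpen {y : ℤ → Fin k | AppearsInPoint k w y} := by
  have : {y : ℤ → Fin k | AppearsInPoint k w y} =
      ⋃ i : ℤ, {y : ℤ → Fin k | AppearsAt w y i} := by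
    ext y; simp only [Set.mem_setOf_eq, Set.mem_iUnion]; rfl
  rw [this]
  exact isOpen_iUnion fun i => isOpen_appearsAt w i

lemma shift_mem (hY : IsSubshift k Y) (t : ℤ) {y : ℤ → Fin k} (hy : y ∈ Y) :
    (fun c => y (c + t)) ∈ Y := by
  induction t using Int.induction_on with
  | zero => simpa using hy
  | succ n ih =>
    have he : (fun c : ℤ => y (c + ((n : ℤ) + 1))) = shiftMap k (fun c => y (c + n)) := by
      funext c; exact congrArg y (by ring)
    rw [he, ← hY.2]
    exact Set.mem_image_of_mem _ ih
  | pred n ih =>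
    have h1 : (fun c : ℤ => y (c + -(n : ℤ))) ∈ shiftMap k '' Y := by rw [hY.2]; exact ih
    obtain ⟨z, hz, hz2⟩ := h1
    have hzeq : z = fun c : ℤ => y (c + (-(n : ℤ) - 1)) := by
      funext c
      have h2 := congrFun hz2 (c - 1)
      simp only [shiftMap, sub_add_cancel] at h2
      rw [h2]; exact congrArg y (by ring)
    rw [← hzeq]
    exact hz

lemma appears_shift {w : List (Fin k)} {y : ℤ → Fin k} (t : ℤ) :
    AppearsInPoint k w (fun c => y (c + t)) ↔ AppearsInPoint k w y := by
  constructor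
  · rintro ⟨i, hi⟩
    exact ⟨i + t, fun j hj => by rw [← hi j hj]; exact congrArg y (by ring)⟩
  · rintro ⟨i, hi⟩
    exact ⟨i - t, fun j hj => by rw [← hi j hj]; exact congrArg y (by ring)⟩

lemma appears_everywhere (hY : IsMinimalSubshift k Y) {w : List (Fin k)}
    (hw : w ∈ Lang k Y) : ∀ y ∈ Y, AppearsInPoint k w y := by
  by_contra h
  push_neg at h
  obtain ⟨y₀, hy₀, hn₀⟩ := h
  set Z : Set (ℤ → Fin k) := Y ∩ {y | ¬ AppearsInPoint k w y} with hZdef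
  have hZY : Z ⊆ Y := Set.inter_subset_left
  have hZc : IsClosed Z := hY.1.1.inter (isOpen_appears w).isClosed_compl
  have hZne : Z.Nonempty := ⟨y₀, hy₀, hn₀⟩
  have hZinv : shiftMap k '' Z = Z := by
    apply Set.Subset.antisymm
    · rintro _ ⟨z, ⟨hzY, hzN⟩, rfl⟩
      constructor
      · rw [← hY.1.2]; exact Set.mem_image_of_mem _ hzY
      · intro hap
        apply hzN
        have : shiftMap k z = fun c => z (c + 1) := rfl
        rw [this] at hap
        exact (appears_shift 1).1 hap
    · rintro z ⟨hzY, hzN⟩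
      have : z ∈ shiftMap k '' Y := by rw [hY.1.2]; exact hzY
      obtain ⟨z', hz', rfl⟩ := this
      refine Set.mem_image_of_mem _ ⟨hz', fun hap => hzN ?_⟩
      have : shiftMap k z' = fun c => z' (c + 1) := rfl
      rw [this]
      exact (appears_shift 1).2 hap
  have hZeq : Z = Y := hY.2.2 Z hZY hZc hZne hZinv
  obtain ⟨x, hx, hax⟩ := hw
  rw [← hZeq] at hx
  exact hx.2 hax

lemma uniform_window (hY : IsMinimalSubshift k Y) {w : List (Fin k)}
    (hw : w ∈ Lang k Y) :
    ∃ m : ℕ, ∀ y ∈ Y, ∃ i : ℤ, -(m : ℤ) ≤ i ∧ i ≤ (m : ℤ) ∧ AppearsAt w y i := by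
  have hYc : IsCompact Y := hY.1.1.isCompact
  have hcov : Y ⊆ ⋃ i : ℤ, {y : ℤ → Fin k | AppearsAt w y i} := by
    intro y hy
    obtain ⟨i, hi⟩ := appears_everywhere hY hw y hy
    exact Set.mem_iUnion.2 ⟨i, hi⟩
  obtain ⟨t, ht⟩ := hYc.elim_finite_subcover _ (fun i => isOpen_appearsAt w i) hcov
  refine ⟨t.sup Int.natAbs, fun y hy => ?_⟩
  obtain ⟨i, hit, hi⟩ := Set.mem_iUnion₂.1 (ht hy)
  have hle : i.natAbs ≤ t.sup Int.natAbs := Finset.le_sup hit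
  exact ⟨i, by omega, by omega, hi⟩

lemma contains_of_mem_lang (hY : IsMinimalSubshift k Y) {w : List (Fin k)}
    (hw : w ∈ Lang k Y) :
    ∃ N : ℕ, ∀ u : List (Fin k), u.length = N → u ∈ Lang k Y →
      containsB w u = true := by
  obtain ⟨m, hm⟩ := uniform_window hY hw
  refine ⟨2 * m + w.length, fun u hu hL => ?_⟩
  obtain ⟨y, hy, i, hi⟩ := hL
  have hy' : (fun c => y (c + (i + m))) ∈ Y := shift_mem hY.1 _ hy
  obtain ⟨p, hp1, hp2, hp⟩ := hm _ hy'
  rw [containsB_iff]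
  have hqnn : (0 : ℤ) ≤ m + p := by omega
  have hqz : ((m + p).toNat : ℤ) = (m : ℤ) + p := Int.toNat_of_nonneg hqnn
  have hqle : (m + p).toNat ≤ 2 * m := by omega
  refine ⟨(m + p).toNat, by omega, fun j hj => ?_⟩
  have hlt : (m + p).toNat + j < u.length := by omega
  rw [List.getElem?_eq_getElem hlt, List.getElem?_eq_getElem hj]
  have h1 := hp j hj
  have h2 := hi ((m + p).toNat + j) (by omega)
  simp only at h1
  have h3 : y (i + (((m + p).toNat + j : ℕ) : ℤ)) = y (p + (j : ℤ) + (i + m)) := by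
    apply congrArg y
    push_cast [hqz]
    ring
  rw [h3, h1] at h2
  simp only [List.get_eq_getElem] at h2 ⊢
  exact congrArg some h2.symm

lemma mem_lang_of_forbidden (hY : IsMinimalSubshift k Y) {w : List (Fin k)} (N : ℕ)
    (h : ∀ u : List (Fin k), u.length = N → containsB w u = false → u ∉ Lang k Y) :
    w ∈ Lang k Y := by
  obtain ⟨y, hy⟩ := hY.2.1
  set u : List (Fin k) := List.ofFn (fun j : Fin N => y j) with hu
  have hulen : u.length = N := by simp [hu]
  have huL : u ∈ Lang k Y := by
    refine ⟨y, hy, 0, fun j hj => ?_⟩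
    simp only [hu, List.get_eq_getElem, List.getElem_ofFn]
    exact congrArg y (by simp)
  have hc : containsB w u = true := by
    by_contra hcc
    exact h u hulen (Bool.not_eq_true _ ▸ hcc) huL
  rw [containsB_iff] at hc
  obtain ⟨q, hqle, hq⟩ := hc
  refine ⟨y, hy, (q : ℤ), fun j hj => ?_⟩
  have hlt : q + j < u.length := by omega
  have h1 := hq j hj
  rw [List.getElem?_eq_getElem hlt, List.getElem?_eq_getElem hj] at h1
  simp only [Option.some.injEq] at h1
  have h2 : u[q + j] = y ((q : ℤ) + (j : ℤ)) := by
    simp only [hu, List.getElem_ofFn]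
    exact congrArg y (by push_cast; simp)
  simp only [List.get_eq_getElem]
  rw [← h2, h1]

end Dynamics

end LangEnumAux

/-- The language of a minimal subshift is enumeration reducible to its
complement (the set of forbidden words). -/
theorem lang_enumRed_compl_of_minimal (k : ℕ) (hk : 1 ≤ k)
    (Y : Set (ℤ → Fin k)) (hY : IsMinimalSubshift k Y) :
    EnumRed (encSet (Lang k Y)) (encSet (Lang k Y)ᶜ) := by
  classical
  refine ⟨LangEnumAux.langF k, LangEnumAux.computable_langF, fun x => ?_⟩
  constructor
  · rintro ⟨w, hwL, rfl⟩
    obtain ⟨N, hN⟩ := LangEnumAux.contains_of_mem_lang hY hwL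
    set F₀ : Finset ℕ :=
      (((LangEnumAux.allLists k N).filter fun u => !LangEnumAux.containsB w u).map
        Encodable.encode).toFinset with hF₀
    obtain ⟨c, hc⟩ : ∃ c : ℕ, Denumerable.ofNat (Finset ℕ) c = F₀ :=
      ⟨_, Denumerable.ofNat_encode F₀⟩
    refine ⟨Nat.pair N c, F₀, ?_, ?_⟩
    · have hgood : LangEnumAux.goodB w N c = true := by
        rw [LangEnumAux.goodB_iff]
        intro u hu hcu
        rw [hc]
        simp only [hF₀, List.mem_toFinset, List.mem_map, List.mem_filter]
        exact ⟨u, ⟨LangEnumAux.mem_allLists.2 hu, by simp [hcu]⟩, rfl⟩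
      simp [LangEnumAux.langF, Encodable.decode₂_encode, Nat.unpair_pair, hgood, hc]
    · intro a ha
      simp only [hF₀, Finset.mem_coe, List.mem_toFinset, List.mem_map,
        List.mem_filter] at ha
      obtain ⟨u, ⟨huA, hcu⟩, rfl⟩ := ha
      refine ⟨u, ?_, rfl⟩
      intro huL
      have hct := hN u (LangEnumAux.mem_allLists.1 huA) huL
      simp [hct] at hcu
  · rintro ⟨n, F, hF, hFB⟩
    simp only [LangEnumAux.langF] at hF
    cases hd : Encodable.decode₂ (List (Fin k)) x with
    | none => rw [hd] at hF; simp at hF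
    | some w =>
      rw [hd] at hF
      simp only [Option.bind_some] at hF
      by_cases hg : LangEnumAux.goodB w n.unpair.1 n.unpair.2 = true
      · rw [if_pos hg] at hF
        have hFeq : F = Denumerable.ofNat (Finset ℕ) n.unpair.2 := (Option.some.inj hF).symm
        have hx : Encodable.encode w = x := Encodable.mem_decode₂.1 (by simp [hd])
        have hwL : w ∈ Lang k Y := by
          apply LangEnumAux.mem_lang_of_forbidden hY n.unpair.1
          intro u hu hcu huL
          have hmem : Encodable.encode u ∈ Denumerable.ofNat (Finset ℕ) n.unpair.2 :=
            (LangEnumAux.goodB_iff _ _ _).1 hg u hu hcu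
          rw [← hFeq] at hmem
          obtain ⟨v, hv, hve⟩ := hFB hmem
          have hvu : v = u := Encodable.encode_injective hve
          exact hv (hvu ▸ huL)
        exact ⟨w, hwL, hx⟩
      · rw [if_neg hg] at hF; simp at hF
end

section
/- Let Y be a minimal subshift over Fin k which is of finite type, i.e., there exists a finite set F of words w : List (Fin k) such that Y = { x : ℤ → Fin k | no w ∈ F appears in x }. Then the language L(Y) is computable (ComputablePred for membership in L(Y), via the encoding of List (Fin k) into ℕ). -/
private lemma list_range_map_eq_iff {α : Type*} {w : List α} {g : ℕ → α} :
    (List.range w.length).map g = w ↔ ∀ t (ht : t < w.length), g t = w.get ⟨t, ht⟩ := by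
  constructor
  · intro h t ht
    have h2 := congrArg (fun l => l[t]?) h
    simp only [List.getElem?_map, List.getElem?_range ht, List.getElem?_eq_getElem ht,
      Option.map_some] at h2
    simpa [List.get_eq_getElem] using Option.some.inj h2
  · intro h
    apply List.ext_get (by simp)
    intro n h1 h2
    simpa using h n (by simpa using h2)

private lemma comp_aux (k p : ℕ) (u : List (Fin k)) (d : Fin k)
    (S : Set (List (Fin k)))
    (hS : ∀ w, w ∈ S ↔ ∃ m, m < p ∧ ∀ t (ht : t < w.length),
      u.getD ((m + t) % p) d = w.get ⟨t, ht⟩) :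
    ComputablePred (· ∈ S) := by
  let L : List (Fin k) → List (List (Fin k)) := fun w =>
    (List.range p).map fun m => (List.range w.length).map fun t => u.getD ((m + t) % p) d
  have inner : Primrec₂ (fun (q : List (Fin k) × ℕ) (t : ℕ) => u.getD ((q.2 + t) % p) d) :=
    Primrec.to₂ ((Primrec.list_getD d).comp (Primrec.const u)
      (Primrec.nat_mod.comp
        (Primrec.nat_add.comp (Primrec.snd.comp Primrec.fst) Primrec.snd)
        (Primrec.const p)))
  have mid : Primrec₂ (fun (w : List (Fin k)) (m : ℕ) =>
      (List.range w.length).map fun t => u.getD ((m + t) % p) d) :=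
    Primrec.to₂ (Primrec.list_map
      (Primrec.list_range.comp (Primrec.list_length.comp Primrec.fst)) inner)
  have hL : Primrec L := Primrec.list_map (Primrec.const (List.range p)) mid
  have hq : PrimrecPred fun w => @List.idxOf _ instBEqOfDecidableEq w (L w) < (L w).length :=
    Primrec.nat_lt.comp (Primrec.list_idxOf.comp Primrec.id hL)
      (Primrec.list_length.comp hL)
  have key : ∀ w, w ∈ S ↔ @List.idxOf _ instBEqOfDecidableEq w (L w) < (L w).length := by
    intro w
    rw [@List.idxOf_lt_length_iff _ instBEqOfDecidableEq, hS]
    simp only [L, List.mem_map, List.mem_range]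
    constructor
    · rintro ⟨m, hm, h⟩; exact ⟨m, hm, list_range_map_eq_iff.mpr h⟩
    · rintro ⟨m, hm, h⟩; exact ⟨m, hm, list_range_map_eq_iff.mp h⟩
  rw [ComputablePred.computable_iff]
  refine ⟨fun w => decide (@List.idxOf _ instBEqOfDecidableEq w (L w) < (L w).length),
    Primrec.to_comp hq.decide, ?_⟩
  funext w
  exact propext (by simpa [decide_eq_true_iff] using key w)

private lemma iter_shift (k : ℕ) (m : ℕ) (x : ℤ → Fin k) :
    (shiftMap k)^[m] x = fun n => x (n + m) := by
  induction m with
  | zero => simp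
  | succ n ih =>
    rw [Function.iterate_succ_apply', ih]
    funext j
    show x (j + 1 + n) = x (j + (n + 1 : ℕ))
    congr 1
    push_cast
    ring

private lemma appears_translate (k : ℕ) (w : List (Fin k)) (x : ℤ → Fin k) (c : ℤ) :
    AppearsInPoint k w (fun n => x (n + c)) ↔ AppearsInPoint k w x := by
  constructor
  · rintro ⟨i₀, h⟩
    refine ⟨i₀ + c, fun j hj => by have := h j hj; rw [← this]; ring_nf⟩
  · rintro ⟨i₀, h⟩
    refine ⟨i₀ - c, fun j hj => by have := h j hj; rw [← this]; ring_nf⟩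

/-- A minimal subshift of finite type has a computable language. -/
theorem lang_computable_of_minimal_SFT (k : ℕ) (hk : 1 ≤ k)
    (Y : Set (ℤ → Fin k)) (hY : IsMinimalSubshift k Y)
    (F : Set (List (Fin k))) (hF : F.Finite)
    (hSFT : Y = {x : ℤ → Fin k | ∀ w ∈ F, ¬ AppearsInPoint k w x}) :
    ComputablePred (· ∈ Lang k Y) := by
  classical
  obtain ⟨⟨Yclosed, Yinv⟩, ⟨x₀, hx₀⟩, hmin⟩ := hY
  set d : Fin k := ⟨0, hk⟩ with hd
  set N : ℕ := hF.toFinset.sup List.length with hNdef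
  have hlen : ∀ w ∈ F, w.length ≤ N := fun w hw =>
    Finset.le_sup (f := List.length) (hF.mem_toFinset.mpr hw)
  obtain ⟨a, b, hab, hwin⟩ :=
    Finite.exists_ne_map_eq_of_infinite (fun m : ℕ => fun t : Fin N => x₀ ((m : ℤ) + (t : ℕ)))
  obtain ⟨i, j, hij, hw⟩ : ∃ i j : ℕ, i < j ∧
      ∀ t : ℕ, t < N → x₀ ((i:ℤ) + t) = x₀ ((j:ℤ) + t) := by
    rcases hab.lt_or_gt with h | h
    · exact ⟨a, b, h, fun t ht => congrFun hwin ⟨t, ht⟩⟩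
    · exact ⟨b, a, h, fun t ht => (congrFun hwin ⟨t, ht⟩).symm⟩
  set p : ℕ := j - i with hpdef
  have hp : 0 < p := Nat.sub_pos_of_lt hij
  have hji : (j : ℤ) = (i : ℤ) + p := by omega
  have hwin' : ∀ t : ℕ, t < N → x₀ ((i:ℤ) + t) = x₀ ((i:ℤ) + p + t) := by
    intro t ht
    simpa [hji, add_assoc] using hw t ht
  -- key periodicity of x₀ on the window [i, i+p+N)
  have key : ∀ s : ℕ, s < p + N → x₀ ((i:ℤ) + s) = x₀ ((i:ℤ) + (s % p : ℕ)) := by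
    intro s
    induction s using Nat.strong_induction_on with
    | _ s IH =>
      intro hs
      by_cases hsp : s < p
      · rw [Nat.mod_eq_of_lt hsp]
      · push_neg at hsp
        obtain ⟨t, rfl⟩ : ∃ t, s = p + t := ⟨s - p, by omega⟩
        have ht : t < N := by omega
        have hcast : ((i:ℤ) + ((p + t : ℕ) : ℤ)) = (i:ℤ) + p + t := by push_cast; ring
        rw [hcast, ← hwin' t ht, Nat.add_mod_left]
        exact IH t (by omega) (by omega)
  set y : ℤ → Fin k := fun m => x₀ ((i:ℤ) + m % (p:ℤ)) with hy
  set u : List (Fin k) := (List.range p).map (fun t : ℕ => x₀ ((i:ℤ) + t)) with hu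
  have hu_getD : ∀ s : ℕ, s < p → u.getD s d = x₀ ((i:ℤ) + s) := by
    intro s hs
    rw [hu, List.getD_eq_getElem _ _ (by simpa using hs)]
    simp
  have hy_nat : ∀ s : ℕ, y (s : ℤ) = x₀ ((i:ℤ) + (s % p : ℕ)) := by
    intro s
    show x₀ ((i:ℤ) + (s:ℤ) % (p:ℤ)) = x₀ ((i:ℤ) + ((s % p : ℕ) : ℤ))
    norm_cast
  have hy_u : ∀ s : ℕ, y (s : ℤ) = u.getD (s % p) d := by
    intro s
    rw [hy_nat, hu_getD _ (Nat.mod_lt _ hp)]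
  have y_mod : ∀ a b : ℤ, a % (p:ℤ) = b % (p:ℤ) → y a = y b := by
    intro a b hab2
    rw [hy]
    simp only [hab2]
  have y_period : ∀ m : ℤ, y (m + (p:ℤ)) = y m := by
    intro m
    apply y_mod
    simp
  -- every window of y of length < N+1 appears in x₀
  have mod_toNat : ∀ m : ℤ, ((m % (p:ℤ)).toNat : ℤ) = m % (p:ℤ) := fun m =>
    Int.toNat_of_nonneg (Int.emod_nonneg m (by exact_mod_cast hp.ne'))
  have mod_lt : ∀ m : ℤ, (m % (p:ℤ)).toNat < p := by
    intro m
    have := Int.emod_lt_of_pos m (by exact_mod_cast hp : (0:ℤ) < (p:ℤ))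
    omega
  have y_window : ∀ (m : ℤ) (t : ℕ), t < N →
      y (m + t) = x₀ ((i:ℤ) + ((m % (p:ℤ)).toNat + t : ℕ)) := by
    intro m t ht
    set m' : ℕ := (m % (p:ℤ)).toNat with hm'
    have h1 : y (m + t) = y ((m' + t : ℕ) : ℤ) := by
      apply y_mod
      push_cast [hm', mod_toNat m]
      rw [Int.emod_add_emod]
    rw [h1, hy_nat, ← key (m' + t) (by have := mod_lt m; omega)]
  have y_in_Y : y ∈ Y := by
    rw [hSFT]
    intro w hwF happ
    have hx₀' : ∀ w ∈ F, ¬ AppearsInPoint k w x₀ := by rw [hSFT] at hx₀; exact hx₀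
    apply hx₀' w hwF
    obtain ⟨i₀, h⟩ := happ
    refine ⟨(i:ℤ) + ((i₀ % (p:ℤ)).toNat : ℕ), fun t ht => ?_⟩
    have := y_window i₀ t (lt_of_lt_of_le ht (hlen w hwF))
    rw [← h t ht, this]
    congr 1
    push_cast
    ring
  -- the orbit of y
  set Z : Set (ℤ → Fin k) := (fun m : ℕ => (shiftMap k)^[m] y) '' (Set.Iio p) with hZ
  have iter_p : (shiftMap k)^[p] y = y := by
    rw [iter_shift]
    funext n
    exact y_period n
  have mem_iter : ∀ m : ℕ, (shiftMap k)^[m] y ∈ Y := by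
    intro m
    induction m with
    | zero => simpa using y_in_Y
    | succ n ih =>
      rw [Function.iterate_succ_apply']
      rw [← Yinv]
      exact ⟨_, ih, rfl⟩
  have hZsub : Z ⊆ Y := by rintro z ⟨m, _, rfl⟩; exact mem_iter m
  have hZfin : Z.Finite := (Set.finite_Iio p).image _
  have hZne : Z.Nonempty := ⟨y, 0, hp, by simp⟩
  have hZinv : shiftMap k '' Z = Z := by
    apply Set.eq_of_subset_of_subset
    · rintro _ ⟨_, ⟨m, hm, rfl⟩, rfl⟩
      show shiftMap k ((shiftMap k)^[m] y) ∈ Z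
      rw [show shiftMap k ((shiftMap k)^[m] y) = (shiftMap k)^[m + 1] y from
        (Function.iterate_succ_apply' _ _ _).symm]
      by_cases hm1 : m + 1 < p
      · exact ⟨m + 1, hm1, rfl⟩
      · have : m + 1 = p := by simp only [Set.mem_Iio] at hm; omega
        rw [this, iter_p]
        exact ⟨0, hp, by simp⟩
    · rintro _ ⟨m, hm, rfl⟩
      match m with
      | 0 =>
        refine ⟨(shiftMap k)^[p - 1] y, ⟨p - 1, by simp only [Set.mem_Iio]; omega, rfl⟩, ?_⟩
        show shiftMap k ((shiftMap k)^[p - 1] y) = (shiftMap k)^[0] y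
        rw [show shiftMap k ((shiftMap k)^[p - 1] y) = (shiftMap k)^[p - 1 + 1] y from
          (Function.iterate_succ_apply' _ _ _).symm, show p - 1 + 1 = p from by omega, iter_p,
          Function.iterate_zero_apply]
      | n + 1 =>
        refine ⟨(shiftMap k)^[n] y, ⟨n, by simp only [Set.mem_Iio] at hm ⊢; omega, rfl⟩, ?_⟩
        exact (Function.iterate_succ_apply' _ _ _).symm
  have hZY : Z = Y := hmin Z hZsub hZfin.isClosed hZne hZinv
  -- characterize the language
  have appears_iter : ∀ (m : ℕ) (w : List (Fin k)),
      AppearsInPoint k w ((shiftMap k)^[m] y) ↔ AppearsInPoint k w y := by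
    intro m w
    rw [iter_shift]
    exact appears_translate k w y m
  have hchar : ∀ w, w ∈ Lang k Y ↔ ∃ m, m < p ∧ ∀ t (ht : t < w.length),
      u.getD ((m + t) % p) d = w.get ⟨t, ht⟩ := by
    intro w
    constructor
    · rintro ⟨x, hx, happ⟩
      rw [← hZY] at hx
      obtain ⟨m, _, rfl⟩ := hx
      rw [appears_iter] at happ
      obtain ⟨i₀, h⟩ := happ
      refine ⟨(i₀ % (p:ℤ)).toNat, mod_lt i₀, fun t ht => ?_⟩
      rw [← h t ht, ← hy_u]
      apply y_mod
      push_cast [mod_toNat i₀]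
      rw [Int.emod_add_emod]
    · rintro ⟨m, hm, h⟩
      refine ⟨y, hZY ▸ ⟨0, hp, by simp⟩, (m : ℤ), fun t ht => ?_⟩
      rw [show ((m:ℤ) + (t:ℤ)) = (((m + t : ℕ)) : ℤ) by push_cast; ring, hy_u]
      exact h t ht
  exact comp_aux k p u d _ hchar
end

section
/- Let S be a recursively enumerable set of nonempty lists of natural numbers. Then the set of all Horn implications that are consequences of S is recursively enumerable: the set { (a, F) : ℕ × Finset ℕ | a ∈ C(↑F) } (equivalently, the set of pairs (a, F) such that every X ∈ V(S) with ↑F ⊆ X satisfies a ∈ X) is recursively enumerable (REPred via Mathlib's encoding of ℕ × Finset ℕ). -/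
namespace ConseqRe

open Encodable Denumerable Nat.Partrec.Code
open Nat.Partrec (Code)

/-- Derivability from `Y` using Horn rules in `S`. -/
inductive Der (S : Set (List ℕ)) (Y : Set ℕ) : ℕ → Prop
  | base {a : ℕ} : a ∈ Y → Der S Y a
  | step {a : ℕ} {t : List ℕ} : (a :: t) ∈ S → (∀ m ∈ t, Der S Y m) → Der S Y a

theorem mem_closure_iff_der (S : Set (List ℕ)) (Y : Set ℕ) (a : ℕ) :
    a ∈ QVclosure S Y ↔ Der S Y a := by
  constructor
  · intro h
    exact h {x | Der S Y x} ⟨fun n₀ t ht hall => Der.step ht hall, fun y hy => Der.base hy⟩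
  · intro h X hX
    induction h with
    | base hy => exact hX.2 hy
    | step ht _ ih => exact hX.1 _ _ ht ih

/-- Boolean membership in a list. -/
def memB (a : ℕ) (l : List ℕ) : Bool := decide (l.idxOf a < l.length)

theorem memB_iff (a : ℕ) (l : List ℕ) : memB a l = true ↔ a ∈ l := by
  simp [memB, List.idxOf_lt_length_iff]

/-- Boolean: every element of `t` is in `acc`. -/
def allMemB (t acc : List ℕ) : Bool := t.foldr (fun m b => memB m acc && b) true

theorem allMemB_iff (t acc : List ℕ) : allMemB t acc = true ↔ ∀ m ∈ t, m ∈ acc := by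
  induction t with
  | nil => simp [allMemB]
  | cons m t ih => simp [allMemB, memB_iff] at ih ⊢; tauto

/-- Boolean certificate checker. -/
def checkAux (sOk : ℕ × List ℕ → Bool) (Fl : List ℕ) :
    List ℕ → List (ℕ × List ℕ) → Bool
  | _, [] => true
  | acc, e :: rest =>
      (memB e.1 Fl || (sOk e && allMemB e.2 acc)) && checkAux sOk Fl (acc ++ [e.1]) rest

theorem checkAux_mono {sOk sOk' : ℕ × List ℕ → Bool} {Fl acc acc' : List ℕ}
    (hs : ∀ x, sOk x = true → sOk' x = true) (ha : ∀ m ∈ acc, m ∈ acc')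
    {cert : List (ℕ × List ℕ)} (h : checkAux sOk Fl acc cert = true) :
    checkAux sOk' Fl acc' cert = true := by
  induction cert generalizing acc acc' with
  | nil => rfl
  | cons e rest ih =>
    simp only [checkAux, Bool.and_eq_true, Bool.or_eq_true] at h ⊢
    refine ⟨?_, ih (fun m hm => ?_) h.2⟩
    · rcases h.1 with h1 | ⟨h1, h2⟩
      · exact Or.inl h1
      · refine Or.inr ⟨hs _ h1, ?_⟩
        rw [allMemB_iff] at h2 ⊢
        exact fun m hm => ha _ (h2 m hm)
    · rcases List.mem_append.1 hm with hm | hm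
      · exact List.mem_append.2 (Or.inl (ha _ hm))
      · exact List.mem_append.2 (Or.inr hm)

theorem checkAux_append (sOk : ℕ × List ℕ → Bool) (Fl : List ℕ) (acc : List ℕ)
    (c₁ c₂ : List (ℕ × List ℕ)) :
    checkAux sOk Fl acc (c₁ ++ c₂) =
      (checkAux sOk Fl acc c₁ && checkAux sOk Fl (acc ++ c₁.map Prod.fst) c₂) := by
  induction c₁ generalizing acc with
  | nil => simp [checkAux]
  | cons e rest ih =>
    show ((memB e.1 Fl || sOk e && allMemB e.2 acc) && checkAux sOk Fl (acc ++ [e.1]) (rest ++ c₂)) = _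
    rw [ih, List.map_cons, List.append_assoc, List.singleton_append]
    show _ = ((_ && checkAux sOk Fl (acc ++ [e.1]) rest) && _)
    rw [Bool.and_assoc]

theorem checkAux_sound {S : Set (List ℕ)} {Y : Set ℕ} {sOk : ℕ × List ℕ → Bool}
    {Fl : List ℕ} (hsS : ∀ x, sOk x = true → (x.1 :: x.2) ∈ S)
    (hFl : ∀ x ∈ Fl, x ∈ Y) :
    ∀ {cert : List (ℕ × List ℕ)} {acc : List ℕ}, checkAux sOk Fl acc cert = true →
      (∀ x ∈ acc, Der S Y x) → ∀ x ∈ cert.map Prod.fst, Der S Y x := by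
  intro cert
  induction cert with
  | nil => intro acc _ _ x hx; simp at hx
  | cons e rest ih =>
    intro acc h hacc x hx
    simp only [checkAux, Bool.and_eq_true, Bool.or_eq_true] at h
    have hd : Der S Y e.1 := by
      rcases h.1 with h1 | ⟨h1, h2⟩
      · exact Der.base (hFl _ ((memB_iff _ _).1 h1))
      · exact Der.step (hsS _ h1) fun m hm => hacc _ ((allMemB_iff _ _).1 h2 m hm)
    rw [List.map_cons, List.mem_cons] at hx
    rcases hx with hx | hx
    · exact hx ▸ hd
    · refine ih h.2 (fun y hy => ?_) x hx
      rcases List.mem_append.1 hy with hy | hy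
      · exact hacc _ hy
      · rw [List.mem_singleton] at hy; exact hy ▸ hd

theorem checkAux_complete {S : Set (List ℕ)} {Y : Set ℕ} {sOkk : ℕ → ℕ × List ℕ → Bool}
    {Fl : List ℕ} (hmono : ∀ {k k'} (x), k ≤ k' → sOkk k x = true → sOkk k' x = true)
    (hcompl : ∀ a t, (a :: t) ∈ S → ∃ k, sOkk k (a, t) = true)
    (hFl : ∀ x ∈ Y, x ∈ Fl) {a : ℕ} (h : Der S Y a) :
    ∃ k cert, checkAux (sOkk k) Fl [] cert = true ∧ a ∈ cert.map Prod.fst := by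
  induction h with
  | @base a hy =>
    refine ⟨0, [(a, [])], ?_, by simp⟩
    have : memB a Fl = true := (memB_iff _ _).2 (hFl _ hy)
    simp [checkAux, this]
  | @step a t ht _ ih =>
    have key : ∀ l : List ℕ,
        (∀ m ∈ l, ∃ k cert, checkAux (sOkk k) Fl [] cert = true ∧ m ∈ cert.map Prod.fst) →
        ∃ k cert, checkAux (sOkk k) Fl [] cert = true ∧ ∀ m ∈ l, m ∈ cert.map Prod.fst := by
      intro l
      induction l with
      | nil => exact fun _ => ⟨0, [], rfl, by simp⟩
      | cons m l ihl =>
        intro hml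
        obtain ⟨k₁, c₁, hc₁, hm₁⟩ := hml m (by simp)
        obtain ⟨k₂, c₂, hc₂, hm₂⟩ := ihl fun x hx => hml x (by simp [hx])
        refine ⟨max k₁ k₂, c₁ ++ c₂, ?_, ?_⟩
        · rw [checkAux_append, Bool.and_eq_true]
          exact ⟨checkAux_mono (fun x => hmono x (le_max_left _ _)) (fun _ h => h) hc₁,
            checkAux_mono (fun x => hmono x (le_max_right _ _))
              (fun y hy => (List.not_mem_nil hy).elim) hc₂⟩
        · intro x hx
          rw [List.map_append, List.mem_append]
          rcases List.mem_cons.1 hx with hx | hx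
          · exact Or.inl (hx ▸ hm₁)
          · exact Or.inr (hm₂ x hx)
    obtain ⟨k₀, hk₀⟩ := hcompl a t ht
    obtain ⟨k, cert, hc, hmem⟩ := key t ih
    refine ⟨max k k₀, cert ++ [(a, t)], ?_, by simp⟩
    rw [checkAux_append, Bool.and_eq_true]
    refine ⟨checkAux_mono (fun x => hmono x (le_max_left _ _)) (fun _ h => h) hc, ?_⟩
    have h1 : sOkk (max k k₀) (a, t) = true := hmono _ (le_max_right _ _) hk₀
    have h2 : allMemB t ([] ++ cert.map Prod.fst) = true :=
      (allMemB_iff _ _).2 fun m hm => by simpa using hmem m hm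
    simp only [checkAux, Bool.and_eq_true, Bool.or_eq_true]
    exact ⟨Or.inr ⟨h1, by simpa using h2⟩, trivial⟩

/-- Stage-`k` boolean approximation of membership of `e.1 :: e.2` in `S`
(via a code `c` enumerating `S`). -/
def sOkk (c : Code) (k : ℕ) (e : ℕ × List ℕ) : Bool :=
  (evaln k c (@encode (List ℕ) Primcodable.toEncodable (e.1 :: e.2))).isSome

/-- Primitive-recursive version of `Denumerable.raise' · 0`. -/
def raiseB (l : List ℕ) : List ℕ :=
  (l.foldl (fun p m => (p.1 ++ [m + p.2], m + p.2 + 1)) ([], 0)).1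

theorem raiseB_aux (l : List ℕ) : ∀ (acc : List ℕ) (n : ℕ),
    (l.foldl (fun p m => (p.1 ++ [m + p.2], m + p.2 + 1)) (acc, n)).1 =
      acc ++ Denumerable.raise' l n := by
  induction l with
  | nil => intro acc n; simp [Denumerable.raise']
  | cons m l ih =>
    intro acc n
    simp only [List.foldl_cons, Denumerable.raise', ih, List.append_assoc,
      List.singleton_append]

theorem raiseB_eq (l : List ℕ) : raiseB l = Denumerable.raise' l 0 := by
  rw [raiseB, raiseB_aux]; simp

/-- The list of elements of a finset, computed from its encoding. -/
def FlOf (F : Finset ℕ) : List ℕ :=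
  raiseB (Denumerable.ofNat (List ℕ) (@encode (Finset ℕ) Denumerable.toEncodable F))

theorem mem_ofNat_finset (n x : ℕ) : x ∈ Denumerable.ofNat (Finset ℕ) n ↔
    x ∈ Denumerable.raise' (Denumerable.ofNat (List ℕ) n) 0 := by
  have h1 : Denumerable.ofNat (Finset ℕ) n =
      Finset.map (Denumerable.eqv ℕ).symm.toEmbedding
        (Denumerable.raise'Finset (Denumerable.ofNat (List ℕ) n) 0) := rfl
  rw [h1]
  simp [Denumerable.raise'Finset, Denumerable.eqv, Finset.mem_mk, Multiset.mem_coe]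
  exact Multiset.mem_coe

theorem mem_FlOf (F : Finset ℕ) (x : ℕ) : x ∈ FlOf F ↔ x ∈ F := by
  rw [FlOf, raiseB_eq, ← mem_ofNat_finset, Denumerable.ofNat_encode]

/-- The full boolean checker. -/
def fCheck (c : Code) (x : (ℕ × Finset ℕ) × ℕ) : Bool :=
  let kc := Denumerable.ofNat (ℕ × List (ℕ × List ℕ)) x.2
  checkAux (sOkk c kc.1) (FlOf x.1.2) [] kc.2 && memB x.1.1 (kc.2.map Prod.fst)

theorem checkAux_foldl (sOk : ℕ × List ℕ → Bool) (Fl : List ℕ) :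
    ∀ (cert : List (ℕ × List ℕ)) (acc : List ℕ) (b : Bool),
      (cert.foldl (fun s e =>
          (s.1 ++ [e.1], s.2 && (memB e.1 Fl || (sOk e && allMemB e.2 s.1)))) (acc, b)).2 =
        (b && checkAux sOk Fl acc cert) := by
  intro cert
  induction cert with
  | nil => intro acc b; simp [checkAux]
  | cons e rest ih =>
    intro acc b
    simp only [List.foldl_cons, checkAux, ih, Bool.and_assoc]

theorem andB_primrec : Primrec₂ (fun x y : Bool => x && y) :=
  (Primrec.cond Primrec.fst Primrec.snd (Primrec.const false)).to₂.of_eq fun a b => by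
    cases a <;> rfl

theorem orB_primrec : Primrec₂ (fun x y : Bool => x || y) :=
  (Primrec.cond Primrec.fst (Primrec.const true) Primrec.snd).to₂.of_eq fun a b => by
    cases a <;> rfl

theorem memB_primrec : Primrec₂ memB :=
  (PrimrecPred.decide (Primrec.nat_lt.comp (Primrec.list_idxOf.comp Primrec.fst Primrec.snd)
    (Primrec.list_length.comp Primrec.snd))).to₂

theorem allMemB_primrec : Primrec₂ allMemB := by
  have : Primrec fun p : List ℕ × List ℕ =>
      p.1.foldr (fun m b => memB m p.2 && b) true :=
    Primrec.list_foldr Primrec.fst (Primrec.const true) <|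
      (andB_primrec.comp
        (memB_primrec.comp (Primrec.fst.comp Primrec.snd) (Primrec.snd.comp Primrec.fst))
        (Primrec.snd.comp Primrec.snd)).to₂
  exact this.to₂

theorem raiseB_primrec : Primrec raiseB := by
  have : Primrec fun l : List ℕ =>
      (l.foldl (fun p m => (p.1 ++ [m + p.2], m + p.2 + 1)) ([], 0)) :=
    Primrec.list_foldl Primrec.id (Primrec.const (([] : List ℕ), (0 : ℕ))) <|
      ((Primrec.list_concat.comp (Primrec.fst.comp (Primrec.fst.comp Primrec.snd))
          (Primrec.nat_add.comp (Primrec.snd.comp Primrec.snd)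
            (Primrec.snd.comp (Primrec.fst.comp Primrec.snd)))).pair
        (Primrec.succ.comp (Primrec.nat_add.comp (Primrec.snd.comp Primrec.snd)
          (Primrec.snd.comp (Primrec.fst.comp Primrec.snd))))).to₂
  exact Primrec.fst.comp this

theorem sOkk_primrec (c : Code) : Primrec₂ (sOkk c) :=
  (Primrec.option_isSome.comp (primrec_evaln.comp
    ((Primrec.fst.pair (Primrec.const c)).pair
      (Primrec.encode.comp (Primrec.list_cons.comp (Primrec.fst.comp Primrec.snd)
        (Primrec.snd.comp Primrec.snd)))))).to₂

theorem FlOf_primrec : Primrec FlOf :=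
  raiseB_primrec.comp ((Primrec.ofNat (List ℕ)).comp Primrec.encode)

theorem fCheck_primrec (c : Code) : Primrec (fCheck c) := by
  have decW : Primrec fun x : (ℕ × Finset ℕ) × ℕ =>
      Denumerable.ofNat (ℕ × List (ℕ × List ℕ)) x.2 :=
    (Primrec.ofNat _).comp Primrec.snd
  have hFl : Primrec fun x : (ℕ × Finset ℕ) × ℕ => FlOf x.1.2 :=
    FlOf_primrec.comp (Primrec.snd.comp Primrec.fst)
  have hk : Primrec fun x : (ℕ × Finset ℕ) × ℕ =>
      (Denumerable.ofNat (ℕ × List (ℕ × List ℕ)) x.2).1 := Primrec.fst.comp decW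
  have hcert : Primrec fun x : (ℕ × Finset ℕ) × ℕ =>
      (Denumerable.ofNat (ℕ × List (ℕ × List ℕ)) x.2).2 := Primrec.snd.comp decW
  have hstep : Primrec₂ fun (x : (ℕ × Finset ℕ) × ℕ)
      (p : (List ℕ × Bool) × (ℕ × List ℕ)) =>
      (p.1.1 ++ [p.2.1], p.1.2 &&
        (memB p.2.1 (FlOf x.1.2) ||
          (sOkk c (Denumerable.ofNat (ℕ × List (ℕ × List ℕ)) x.2).1 p.2 &&
            allMemB p.2.2 p.1.1))) := by
    have e1 : Primrec fun q : ((ℕ × Finset ℕ) × ℕ) × ((List ℕ × Bool) × (ℕ × List ℕ)) =>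
        q.2.1.1 ++ [q.2.2.1] :=
      Primrec.list_concat.comp (Primrec.fst.comp (Primrec.fst.comp Primrec.snd))
        (Primrec.fst.comp (Primrec.snd.comp Primrec.snd))
    have eA : Primrec fun q : ((ℕ × Finset ℕ) × ℕ) × ((List ℕ × Bool) × (ℕ × List ℕ)) =>
        memB q.2.2.1 (FlOf q.1.1.2) :=
      memB_primrec.comp (Primrec.fst.comp (Primrec.snd.comp Primrec.snd))
        (hFl.comp Primrec.fst)
    have eB : Primrec fun q : ((ℕ × Finset ℕ) × ℕ) × ((List ℕ × Bool) × (ℕ × List ℕ)) =>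
        sOkk c (Denumerable.ofNat (ℕ × List (ℕ × List ℕ)) q.1.2).1 q.2.2 :=
      (sOkk_primrec c).comp (hk.comp Primrec.fst) (Primrec.snd.comp Primrec.snd)
    have eC : Primrec fun q : ((ℕ × Finset ℕ) × ℕ) × ((List ℕ × Bool) × (ℕ × List ℕ)) =>
        allMemB q.2.2.2 q.2.1.1 :=
      allMemB_primrec.comp (Primrec.snd.comp (Primrec.snd.comp Primrec.snd))
        (Primrec.fst.comp (Primrec.fst.comp Primrec.snd))
    exact (e1.pair (andB_primrec.comp
      (Primrec.snd.comp (Primrec.fst.comp Primrec.snd))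
      (orB_primrec.comp eA (andB_primrec.comp eB eC)))).to₂
  have hfold : Primrec fun x : (ℕ × Finset ℕ) × ℕ =>
      (Denumerable.ofNat (ℕ × List (ℕ × List ℕ)) x.2).2.foldl
        (fun s e => (s.1 ++ [e.1], s.2 &&
          (memB e.1 (FlOf x.1.2) ||
            (sOkk c (Denumerable.ofNat (ℕ × List (ℕ × List ℕ)) x.2).1 e &&
              allMemB e.2 s.1)))) (([] : List ℕ), true) :=
    Primrec.list_foldl hcert (Primrec.const (([] : List ℕ), true)) hstep
  have hmap : Primrec fun x : (ℕ × Finset ℕ) × ℕ =>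
      ((Denumerable.ofNat (ℕ × List (ℕ × List ℕ)) x.2).2.map Prod.fst) :=
    Primrec.list_map hcert (Primrec.fst.comp Primrec.snd).to₂
  refine (andB_primrec.comp (Primrec.snd.comp hfold)
    (memB_primrec.comp (Primrec.fst.comp Primrec.fst) hmap)).of_eq fun x => ?_
  simp only [fCheck, checkAux_foldl, Bool.true_and]

end ConseqRe

/-- The set of Horn implications entailed by an r.e. set `S` is itself
recursively enumerable. -/
theorem consequences_re (S : Set (List ℕ)) (hne : ∀ l ∈ S, l ≠ [])
    (hS : REPred (· ∈ S)) :
    REPred (fun p : ℕ × Finset ℕ => p.1 ∈ QVclosure S ↑p.2) := by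
  classical
  open ConseqRe Nat.Partrec.Code Encodable in
  obtain ⟨c, hc⟩ := exists_code.1 (hS : Nat.Partrec fun n =>
      Part.bind (Encodable.decode (α := List ℕ) n) fun l =>
        ((Part.assert (l ∈ S) fun _ => Part.some ()).map Encodable.encode))
  have hdom : ∀ l : List ℕ, (eval c (Encodable.encode l)).Dom ↔ l ∈ S := by
    intro l
    rw [hc]
    simp [Encodable.encodek, Part.assert]
  have hsound : ∀ (x : ℕ × List ℕ) (k : ℕ), ConseqRe.sOkk c k x = true → (x.1 :: x.2) ∈ S := by
    intro x k h
    rw [ConseqRe.sOkk] at h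
    obtain ⟨y, hy⟩ := Option.isSome_iff_exists.1 h
    exact (hdom _).1 (Part.dom_iff_mem.2 ⟨y, evaln_sound hy⟩)
  have hmono : ∀ {k k' : ℕ} (x : ℕ × List ℕ), k ≤ k' →
      ConseqRe.sOkk c k x = true → ConseqRe.sOkk c k' x = true := by
    intro k k' x hkk h
    rw [ConseqRe.sOkk] at h ⊢
    obtain ⟨y, hy⟩ := Option.isSome_iff_exists.1 h
    exact Option.isSome_iff_exists.2 ⟨y, evaln_mono hkk hy⟩
  have hcompl : ∀ (a : ℕ) (t : List ℕ), (a :: t) ∈ S → ∃ k,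
      ConseqRe.sOkk c k (a, t) = true := by
    intro a t ht
    obtain ⟨y, hy⟩ := Part.dom_iff_mem.1 ((hdom _).2 ht)
    obtain ⟨k, hk⟩ := evaln_complete.1 hy
    exact ⟨k, Option.isSome_iff_exists.2 ⟨y, hk⟩⟩
  have main : ∀ p : ℕ × Finset ℕ,
      p.1 ∈ QVclosure S ↑p.2 ↔ ∃ w : ℕ, ConseqRe.fCheck c (p, w) = true := by
    rintro ⟨a, F⟩
    rw [ConseqRe.mem_closure_iff_der]
    constructor
    · intro hder
      obtain ⟨k, cert, hck, hmem⟩ := ConseqRe.checkAux_complete (sOkk := ConseqRe.sOkk c)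
        (Fl := ConseqRe.FlOf F) hmono hcompl
        (fun x hx => (ConseqRe.mem_FlOf F x).2 hx) hder
      refine ⟨@Encodable.encode _ Denumerable.toEncodable
        ((k, cert) : ℕ × List (ℕ × List ℕ)), ?_⟩
      rw [ConseqRe.fCheck]
      simp only [Denumerable.ofNat_encode]
      rw [Bool.and_eq_true]
      exact ⟨hck, (ConseqRe.memB_iff _ _).2 hmem⟩
    · rintro ⟨w, hw⟩
      rw [ConseqRe.fCheck, Bool.and_eq_true] at hw
      exact ConseqRe.checkAux_sound (fun x hx => hsound x _ hx)
        (fun x hx => (ConseqRe.mem_FlOf F x).1 hx) hw.1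
        (fun x hx => absurd hx List.not_mem_nil) a
        ((ConseqRe.memB_iff _ _).1 hw.2)
  have hpart : Partrec fun p : ℕ × Finset ℕ =>
      Nat.rfind fun w => Part.some (ConseqRe.fCheck c (p, w)) :=
    Partrec.rfind ((ConseqRe.fCheck_primrec c).to_comp.to₂.partrec₂)
  refine hpart.dom_re.of_eq fun p => ?_
  refine Iff.trans Nat.rfind_dom ?_
  constructor
  · rintro ⟨n, hn, -⟩
    exact (main p).2 ⟨n, by simpa using hn⟩
  · intro hp
    obtain ⟨w, hw⟩ := (main p).1 hp
    exact ⟨w, by simpa using hw, fun _ => trivial⟩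
end
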